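/- arXiv:2206.09695 — 3 statements merged into one kernel-verified Lean document; each statement's English description precedes it below -/
import Mathlib

section
/- For k ≡ 0 (mod 4) and odd t ≥ 3, the tensor product K_{k+1} × K_t admits a partial C_k-factorization: its edge set can be partitioned into (k+1)(t−1)/2 partial C_k-factors, where each partial C_k-factor is a 2-regular subgraph spanning all vertices outside one part whose components are all k-cycles. -/
namespace Stmt10Aux

/-- integer positions of the base cycle -/
def Xg (u m : ℕ) : ℤ :=
  if m % 2 = 0 then -((m / 2 : ℕ) : ℤ)
  else if m < 2 * u then ((m / 2 : ℕ) : ℤ) + 1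
  else ((m / 2 : ℕ) : ℤ) + 2

/-- the difference labels -/
def Cg (u m : ℕ) : ℕ :=
  if m < 2 * u then m + 1 else if m = 4 * u - 1 then 2 * u + 1 else m + 2

def Cinv (u w : ℕ) : ℕ :=
  if w ≤ 2 * u then w - 1 else if w = 2 * u + 1 then 4 * u - 1 else w - 2

def Xinv (u w : ℕ) : ℕ :=
  if w = 0 then 0 else if w ≤ u then 2 * w - 1
  else if w ≤ 2 * u + 1 then 2 * w - 3 else 2 * (4 * u + 1 - w)

lemma Xg_bound {u m : ℕ} (hu : 1 ≤ u) (hm : m < 4 * u) :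
    -(2 * (u : ℤ)) < Xg u m ∧ Xg u m < 2 * u + 2 ∧ Xg u m ≠ (u : ℤ) + 1 := by
  unfold Xg; split_ifs <;> refine ⟨by omega, by omega, by omega⟩

lemma Xg_inj {u m1 m2 : ℕ} (h1 : m1 < 4 * u) (h2 : m2 < 4 * u)
    (h : Xg u m1 = Xg u m2) : m1 = m2 := by
  unfold Xg at h; split_ifs at h <;> omega

lemma Xg_succ {u m : ℕ} (hu : 1 ≤ u) (hm : m < 4 * u) :
    Xg u ((m + 1) % (4 * u)) = Xg u m + (if m % 2 = 0 then (Cg u m : ℤ) else -(Cg u m : ℤ)) := by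
  have h1 : (m + 1) % (4 * u) = if m = 4 * u - 1 then 0 else m + 1 := by
    split_ifs with h
    · subst h; rw [show 4 * u - 1 + 1 = 4 * u by omega, Nat.mod_self]
    · exact Nat.mod_eq_of_lt (by omega)
  rw [h1]
  by_cases h : m = 4 * u - 1
  · rw [if_pos h]; subst h; unfold Xg Cg; split_ifs <;> omega
  · rw [if_neg h]; unfold Xg Cg; split_ifs <;> omega

lemma Cg_bound {u m : ℕ} (hu : 1 ≤ u) (hm : m < 4 * u) : 1 ≤ Cg u m ∧ Cg u m ≤ 4 * u := by
  unfold Cg; split_ifs <;> omega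

lemma Cinv_Cg {u m : ℕ} (hu : 1 ≤ u) (hm : m < 4 * u) : Cinv u (Cg u m) = m := by
  unfold Cg Cinv; split_ifs <;> omega

lemma Cg_Cinv {u w : ℕ} (hu : 1 ≤ u) (hw1 : 1 ≤ w) (hw2 : w ≤ 4 * u) :
    Cinv u w < 4 * u ∧ Cg u (Cinv u w) = w := by
  unfold Cg Cinv; split_ifs <;> omega

lemma Xinv_spec {u w : ℕ} (hu : 1 ≤ u) (hw : w ≤ 4 * u) (hne : w ≠ u + 1) :
    Xinv u w < 4 * u ∧ (Xg u (Xinv u w) = (w : ℤ) ∨ Xg u (Xinv u w) = (w : ℤ) - (4 * u + 1)) := by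
  unfold Xinv Xg; split_ifs <;> refine ⟨by omega, by omega⟩

section ZModLayer

lemma zmod_int_inj {n : ℕ} {a b : ℤ} (h : ((a : ZMod n) = (b : ZMod n)))
    (hb : |a - b| < n) : a = b := by
  have hd : (n : ℤ) ∣ b - a := ((ZMod.intCast_eq_intCast_iff a b n).mp h).dvd
  have h0 : b - a = 0 := Int.eq_zero_of_abs_lt_dvd hd (by rw [abs_sub_comm] at hb; exact hb)
  omega

def Pg (u m : ℕ) : ZMod (4 * u + 1) :=
  ((Xg u (m % (4 * u)) - (u + 1 : ℤ) : ℤ) : ZMod (4 * u + 1))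

lemma Pg_congr {u m1 m2 : ℕ} (h : m1 % (4 * u) = m2 % (4 * u)) : Pg u m1 = Pg u m2 := by
  unfold Pg; rw [h]

lemma Pg_inj {u m1 m2 : ℕ} (hu : 1 ≤ u) (h : Pg u m1 = Pg u m2) :
    m1 % (4 * u) = m2 % (4 * u) := by
  have l1 : m1 % (4 * u) < 4 * u := Nat.mod_lt _ (by omega)
  have l2 : m2 % (4 * u) < 4 * u := Nat.mod_lt _ (by omega)
  obtain ⟨a1, a2, a3⟩ := Xg_bound hu l1
  obtain ⟨b1, b2, b3⟩ := Xg_bound hu l2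
  unfold Pg at h
  have := zmod_int_inj h (by rw [abs_sub_lt_iff]; constructor <;> push_cast <;> omega)
  exact Xg_inj l1 l2 (by omega)

lemma Pg_ne_zero {u : ℕ} (hu : 1 ≤ u) (m : ℕ) : Pg u m ≠ 0 := by
  intro h
  have l1 : m % (4 * u) < 4 * u := Nat.mod_lt _ (by omega)
  obtain ⟨a1, a2, a3⟩ := Xg_bound hu l1
  unfold Pg at h
  rw [show (0 : ZMod (4 * u + 1)) = ((0 : ℤ) : ZMod (4 * u + 1)) by norm_cast] at h
  have := zmod_int_inj h (by rw [abs_sub_lt_iff]; constructor <;> push_cast <;> omega)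
  omega

lemma Pg_succ_ne {u : ℕ} (hu : 1 ≤ u) (m : ℕ) : Pg u (m + 1) ≠ Pg u m := by
  intro h
  have h1 := Pg_inj hu h
  have h2 : (4 * u : ℕ) ∣ (m + 1) - m := (Nat.modEq_iff_dvd' (Nat.le_succ m)).mp h1.symm
  rw [show m + 1 - m = 1 by omega] at h2
  exact absurd (Nat.le_of_dvd one_pos h2) (by omega)

lemma Pg_prev_ne {u : ℕ} (hu : 1 ≤ u) (m : ℕ) : Pg u (m + 1) ≠ Pg u (m + (4 * u - 1)) := by
  intro h
  have h1 := Pg_inj hu h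
  have h2 : (4 * u : ℕ) ∣ (m + (4 * u - 1)) - (m + 1) :=
    (Nat.modEq_iff_dvd' (by omega)).mp h1
  rw [show m + (4 * u - 1) - (m + 1) = 4 * u - 2 by omega] at h2
  exact absurd (Nat.le_of_dvd (by omega) h2) (by omega)

lemma Pg_surj {u : ℕ} (hu : 1 ≤ u) (r : ZMod (4 * u + 1)) (hr : r ≠ 0) :
    ∃ m, m < 4 * u ∧ Pg u m = r := by
  haveI : NeZero (4 * u + 1) := ⟨by omega⟩
  obtain ⟨w, hwlt, hwval⟩ : ∃ w, w < 4 * u + 1 ∧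
      ((w : ℕ) : ZMod (4 * u + 1)) = r + ((u + 1 : ℕ) : ZMod (4 * u + 1)) :=
    ⟨(r + ((u + 1 : ℕ) : ZMod (4 * u + 1))).val, ZMod.val_lt _, by
      rw [ZMod.natCast_val, ZMod.cast_id]⟩
  have hwne : w ≠ u + 1 := by
    intro h
    rw [h] at hwval
    exact hr (add_eq_right.mp hwval.symm)
  obtain ⟨hm, hx⟩ := Xinv_spec hu (by omega) hwne
  refine ⟨Xinv u w, hm, ?_⟩
  unfold Pg
  rw [Nat.mod_eq_of_lt hm]
  rcases hx with hx | hx <;> rw [hx]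
  · have h3 : (((w : ℤ) - (u + 1 : ℤ) : ℤ) : ZMod (4 * u + 1))
        = ((w : ℕ) : ZMod (4 * u + 1)) - ((u + 1 : ℕ) : ZMod (4 * u + 1)) := by
      push_cast; ring
    rw [h3, hwval]; ring
  · have h3 : (((w : ℤ) - (4 * u + 1) - (u + 1 : ℤ) : ℤ) : ZMod (4 * u + 1))
        = ((w : ℕ) : ZMod (4 * u + 1)) - ((4 * u + 1 : ℕ) : ZMod (4 * u + 1))
            - ((u + 1 : ℕ) : ZMod (4 * u + 1)) := by
      push_cast; ring
    rw [h3, hwval, ZMod.natCast_self]; ring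

lemma val_neg_cast {tt s : ℕ} (hs : s < tt) :
    -((s + 1 : ℕ) : ZMod (2 * tt + 1)) = ((2 * tt - s : ℕ) : ZMod (2 * tt + 1)) := by
  have h : ((2 * tt - s : ℕ) : ZMod (2 * tt + 1)) + ((s + 1 : ℕ) : ZMod (2 * tt + 1)) = 0 := by
    rw [← Nat.cast_add, show 2 * tt - s + (s + 1) = 2 * tt + 1 by omega, ZMod.natCast_self]
  linear_combination -h

end ZModLayer

section GraphLayer

open SimpleGraph

def lvg (tt : ℕ) (σ : ZMod (2 * tt + 1)) (m : ℕ) : ZMod (2 * tt + 1) :=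
  if m % 2 = 0 then 0 else σ

def cycg (u tt : ℕ) (i : ZMod (4 * u + 1)) (σ : ZMod (2 * tt + 1)) (m : ℕ)
    (a : ZMod (2 * tt + 1)) : ZMod (4 * u + 1) × ZMod (2 * tt + 1) :=
  (i + Pg u m, a + lvg tt σ m)

def EG (u tt : ℕ) (i : ZMod (4 * u + 1)) (σ : ZMod (2 * tt + 1)) :
    SimpleGraph (ZMod (4 * u + 1) × ZMod (2 * tt + 1)) :=
  SimpleGraph.fromRel (fun x y => ∃ m, m < 4 * u ∧ ∃ a,
    x = cycg u tt i σ m a ∧ y = cycg u tt i σ (m + 1) a)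

variable {u tt : ℕ} {i : ZMod (4 * u + 1)} {σ : ZMod (2 * tt + 1)}

@[simp] lemma cycg_fst (m : ℕ) (a : ZMod (2 * tt + 1)) :
    (cycg u tt i σ m a).1 = i + Pg u m := rfl

@[simp] lemma cycg_snd (m : ℕ) (a : ZMod (2 * tt + 1)) :
    (cycg u tt i σ m a).2 = a + lvg tt σ m := rfl

lemma lvg_congr {m1 m2 : ℕ} (h : m1 % 2 = m2 % 2) : lvg tt σ m1 = lvg tt σ m2 := by
  unfold lvg; rw [h]

lemma cycg_congr (hu : 1 ≤ u) {m1 m2 : ℕ} (h : m1 % (4 * u) = m2 % (4 * u))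
    (a : ZMod (2 * tt + 1)) : cycg u tt i σ m1 a = cycg u tt i σ m2 a := by
  have e1 : m1 % (4 * u) % 2 = m1 % 2 := Nat.mod_mod_of_dvd _ ⟨2 * u, by ring⟩
  have e2 : m2 % (4 * u) % 2 = m2 % 2 := Nat.mod_mod_of_dvd _ ⟨2 * u, by ring⟩
  unfold cycg
  rw [Pg_congr h, lvg_congr (show m1 % 2 = m2 % 2 by omega)]

lemma cycg_inj (hu : 1 ≤ u) {m1 m2 : ℕ} {a1 a2 : ZMod (2 * tt + 1)}
    (h : cycg u tt i σ m1 a1 = cycg u tt i σ m2 a2) :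
    m1 % (4 * u) = m2 % (4 * u) ∧ a1 = a2 := by
  obtain ⟨h1, h2⟩ := Prod.ext_iff.mp h
  simp only [cycg_fst, cycg_snd] at h1 h2
  have hm := Pg_inj hu (add_left_cancel h1)
  refine ⟨hm, ?_⟩
  have e1 : m1 % (4 * u) % 2 = m1 % 2 := Nat.mod_mod_of_dvd _ ⟨2 * u, by ring⟩
  have e2 : m2 % (4 * u) % 2 = m2 % 2 := Nat.mod_mod_of_dvd _ ⟨2 * u, by ring⟩
  have hl : lvg tt σ m1 = lvg tt σ m2 := lvg_congr (by omega)
  rw [hl] at h2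
  exact add_right_cancel h2

lemma cycg_succ_ne (hu : 1 ≤ u) (m : ℕ) (a b : ZMod (2 * tt + 1)) :
    cycg u tt i σ m a ≠ cycg u tt i σ (m + 1) b := by
  intro h
  have h1 := congrArg Prod.fst h
  simp only [cycg_fst] at h1
  exact Pg_succ_ne hu m (add_left_cancel h1).symm

lemma adj_succ (hu : 1 ≤ u) (m : ℕ) (a : ZMod (2 * tt + 1)) :
    (EG u tt i σ).Adj (cycg u tt i σ m a) (cycg u tt i σ (m + 1) a) := by
  rw [EG, SimpleGraph.fromRel_adj]
  refine ⟨cycg_succ_ne hu m a a, Or.inl ?_⟩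
  refine ⟨m % (4 * u), Nat.mod_lt _ (by omega), a, ?_, ?_⟩
  · exact cycg_congr hu (Nat.mod_mod_of_dvd m dvd_rfl).symm a
  · exact cycg_congr hu (((Nat.mod_modEq m (4 * u)).add_right 1).symm :
      (m + 1) % (4 * u) = (m % (4 * u) + 1) % (4 * u)) a

lemma cycg_add_period (hu : 1 ≤ u) (m : ℕ) (a : ZMod (2 * tt + 1)) :
    cycg u tt i σ (m + 4 * u) a = cycg u tt i σ m a :=
  cycg_congr hu (Nat.add_mod_right m (4 * u)) a

lemma adj_prev (hu : 1 ≤ u) (m : ℕ) (a : ZMod (2 * tt + 1)) :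
    (EG u tt i σ).Adj (cycg u tt i σ m a) (cycg u tt i σ (m + (4 * u - 1)) a) := by
  have h := adj_succ (i := i) (σ := σ) hu (m + (4 * u - 1)) a
  have h2 : cycg u tt i σ (m + (4 * u - 1) + 1) a = cycg u tt i σ m a := by
    rw [show m + (4 * u - 1) + 1 = m + 4 * u by omega]
    exact cycg_add_period hu m a
  rw [h2] at h
  exact h.symm

lemma nbhd (hu : 1 ≤ u) (m : ℕ) (a : ZMod (2 * tt + 1)) :
    (EG u tt i σ).neighborSet (cycg u tt i σ m a) =
      {cycg u tt i σ (m + 1) a, cycg u tt i σ (m + (4 * u - 1)) a} := by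
  ext y
  simp only [mem_neighborSet, Set.mem_insert_iff, Set.mem_singleton_iff]
  constructor
  · intro hadj
    rw [EG, SimpleGraph.fromRel_adj] at hadj
    obtain ⟨hne, hrel | hrel⟩ := hadj
    · obtain ⟨m', hm', a', h1, h2⟩ := hrel
      obtain ⟨hmm, rfl⟩ := cycg_inj hu h1
      left
      rw [h2]
      exact cycg_congr hu ((Nat.ModEq.add_right 1 hmm).symm :
        (m' + 1) % (4 * u) = (m + 1) % (4 * u)) a
    · obtain ⟨m', hm', a', h2, h1⟩ := hrel
      obtain ⟨hmm, rfl⟩ := cycg_inj hu h1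
      right
      rw [h2]
      apply cycg_congr hu
      have h3 : (m' + 1 + (4 * u - 1)) % (4 * u) = (m + (4 * u - 1)) % (4 * u) :=
        Nat.ModEq.add_right _ hmm.symm
      rw [show m' + 1 + (4 * u - 1) = m' + 4 * u by omega] at h3
      rw [Nat.add_mod_right] at h3
      exact h3
  · rintro (rfl | rfl)
    · exact adj_succ hu m a
    · exact adj_prev hu m a

lemma nbhd_ne (hu : 1 ≤ u) (m : ℕ) (a : ZMod (2 * tt + 1)) :
    cycg u tt i σ (m + 1) a ≠ cycg u tt i σ (m + (4 * u - 1)) a := by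
  intro h
  have h1 := congrArg Prod.fst h
  simp only [cycg_fst] at h1
  exact Pg_prev_ne hu m (add_left_cancel h1)

lemma exists_rep (hu : 1 ≤ u) (x : ZMod (4 * u + 1) × ZMod (2 * tt + 1)) (hx : x.1 ≠ i) :
    ∃ m, m < 4 * u ∧ ∃ a, x = cycg u tt i σ m a := by
  obtain ⟨m, hm, hP⟩ := Pg_surj hu (x.1 - i) (sub_ne_zero.mpr hx)
  refine ⟨m, hm, x.2 - lvg tt σ m, ?_⟩
  have h1 : (cycg u tt i σ m (x.2 - lvg tt σ m)).1 = x.1 := by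
    rw [cycg_fst, hP]; ring
  have h2 : (cycg u tt i σ m (x.2 - lvg tt σ m)).2 = x.2 := by
    rw [cycg_snd]; ring
  exact Prod.ext_iff.mpr ⟨h1.symm, h2.symm⟩

lemma support_iff (hu : 1 ≤ u) (x : ZMod (4 * u + 1) × ZMod (2 * tt + 1)) :
    ((EG u tt i σ).neighborSet x).Nonempty ↔ x.1 ≠ i := by
  constructor
  · rintro ⟨y, hy⟩
    rw [mem_neighborSet, EG, SimpleGraph.fromRel_adj] at hy
    obtain ⟨-, hrel | hrel⟩ := hy
    · obtain ⟨m', hm', a', h1, -⟩ := hrel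
      intro hx
      apply Pg_ne_zero hu m'
      have : x.1 = i + Pg u m' := by rw [h1, cycg_fst]
      rw [hx] at this
      exact (add_eq_left.mp this.symm)
    · obtain ⟨m', hm', a', -, h1⟩ := hrel
      intro hx
      apply Pg_ne_zero hu (m' + 1)
      have : x.1 = i + Pg u (m' + 1) := by rw [h1, cycg_fst]
      rw [hx] at this
      exact (add_eq_left.mp this.symm)
  · intro hx
    obtain ⟨m, hm, a, rfl⟩ := exists_rep (σ := σ) hu x hx
    exact ⟨cycg u tt i σ (m + 1) a, adj_succ hu m a⟩

lemma walk_mem {V : Type*} {G : SimpleGraph V} {S : Set V}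
    (hS : ∀ a b, G.Adj a b → a ∈ S → b ∈ S) {x w : V} (p : G.Walk x w) : x ∈ S → w ∈ S := by
  induction p with
  | nil => exact id
  | cons h q ih => exact fun hx => ih (hS _ _ h hx)

lemma reach_closed_aux (hu : 1 ≤ u) (a : ZMod (2 * tt + 1)) :
    ∀ v w, (EG u tt i σ).Adj v w → (v ∈ {w | ∃ j < 4 * u, cycg u tt i σ j a = w}) →
      (w ∈ {w | ∃ j < 4 * u, cycg u tt i σ j a = w}) := by
  rintro v w hadj ⟨j, hj, rfl⟩
  have hw : w ∈ (EG u tt i σ).neighborSet (cycg u tt i σ j a) := hadj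
  rw [nbhd hu j a] at hw
  rcases hw with rfl | rfl
  · exact ⟨(j + 1) % (4 * u), Nat.mod_lt _ (by omega),
      cycg_congr hu (Nat.mod_mod_of_dvd _ dvd_rfl) a⟩
  · exact ⟨(j + (4 * u - 1)) % (4 * u), Nat.mod_lt _ (by omega),
      cycg_congr hu (Nat.mod_mod_of_dvd _ dvd_rfl) a⟩

lemma reach_set (hu : 1 ≤ u) (m : ℕ) (a : ZMod (2 * tt + 1)) :
    {w | (EG u tt i σ).Reachable (cycg u tt i σ m a) w} =
      ↑((Finset.range (4 * u)).image (fun j => cycg u tt i σ j a)) := by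
  ext w
  simp only [Set.mem_setOf_eq, Finset.coe_image, Set.mem_image, Finset.mem_coe,
    Finset.mem_range]
  constructor
  · intro hr
    obtain ⟨p⟩ := hr
    exact walk_mem (S := {w | ∃ j < 4 * u, cycg u tt i σ j a = w})
      (reach_closed_aux hu a) p
      ⟨m % (4 * u), Nat.mod_lt _ (by omega),
        (cycg_congr hu (Nat.mod_mod_of_dvd m dvd_rfl) a :
          cycg u tt i σ (m % (4 * u)) a = cycg u tt i σ m a)⟩
  · rintro ⟨j, hj, rfl⟩
    have key : ∀ jd : ℕ, (EG u tt i σ).Reachable (cycg u tt i σ m a)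
        (cycg u tt i σ (m + jd) a) := by
      intro jd
      induction jd with
      | zero => exact Reachable.refl _
      | succ jd ih => exact ih.trans (adj_succ hu (m + jd) a).reachable
    have heq : cycg u tt i σ (m + (j + (4 * u - m % (4 * u)))) a = cycg u tt i σ j a := by
      apply cycg_congr hu
      have hdm := Nat.mod_add_div m (4 * u)
      have hlt : m % (4 * u) < 4 * u := Nat.mod_lt _ (by omega)
      rw [show m + (j + (4 * u - m % (4 * u))) = j + 4 * u + 4 * u * (m / (4 * u)) by omega]
      rw [Nat.add_mul_mod_self_left, Nat.add_mod_right]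
    exact heq ▸ key _

lemma reach_card (hu : 1 ≤ u) (m : ℕ) (a : ZMod (2 * tt + 1)) :
    {w | (EG u tt i σ).Reachable (cycg u tt i σ m a) w}.ncard = 4 * u := by
  rw [reach_set hu m a, Set.ncard_coe_finset]
  rw [Finset.card_image_of_injOn, Finset.card_range]
  intro j1 h1 j2 h2 he
  simp only [Finset.coe_range, Set.mem_Iio] at h1 h2
  have := (cycg_inj hu he).1
  rwa [Nat.mod_eq_of_lt h1, Nat.mod_eq_of_lt h2] at this

lemma adj_iff (hu : 1 ≤ u) {x y : ZMod (4 * u + 1) × ZMod (2 * tt + 1)} :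
    (EG u tt i σ).Adj x y ↔ ∃ m, m < 4 * u ∧ ∃ a,
      ((x = cycg u tt i σ m a ∧ y = cycg u tt i σ (m + 1) a) ∨
       (y = cycg u tt i σ m a ∧ x = cycg u tt i σ (m + 1) a)) := by
  rw [EG, SimpleGraph.fromRel_adj]
  constructor
  · rintro ⟨-, h | h⟩
    · obtain ⟨m, hm, a, h1, h2⟩ := h
      exact ⟨m, hm, a, Or.inl ⟨h1, h2⟩⟩
    · obtain ⟨m, hm, a, h1, h2⟩ := h
      exact ⟨m, hm, a, Or.inr ⟨h1, h2⟩⟩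
  · rintro ⟨m, hm, a, ⟨h1, h2⟩ | ⟨h1, h2⟩⟩
    · exact ⟨by rw [h1, h2]; exact cycg_succ_ne hu m a a, Or.inl ⟨m, hm, a, h1, h2⟩⟩
    · exact ⟨by rw [h1, h2]; exact (cycg_succ_ne hu m a a).symm, Or.inr ⟨m, hm, a, h1, h2⟩⟩

lemma Pg_succ_sub (hu : 1 ≤ u) {m : ℕ} (hm : m < 4 * u) :
    Pg u (m + 1) - Pg u m = (if m % 2 = 0 then ((Cg u m : ℕ) : ZMod (4 * u + 1))
      else -((Cg u m : ℕ) : ZMod (4 * u + 1))) := by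
  unfold Pg
  rw [Nat.mod_eq_of_lt hm, Xg_succ hu hm]
  split_ifs with h <;> push_cast <;> ring

lemma lvg_succ_sub (m : ℕ) :
    lvg tt σ (m + 1) - lvg tt σ m = (if m % 2 = 0 then σ else -σ) := by
  unfold lvg
  split_ifs <;> first | omega | ring

end GraphLayer

end Stmt10Aux

open SimpleGraph

/-- The tensor product `K_u × K_g`: vertices `(i,a)` and `(j,b)` are adjacent
iff `i ≠ j` and `a ≠ b`. -/
def tensorK (u g : ℕ) : SimpleGraph (Fin u × Fin g) where
  Adj x y := x.1 ≠ y.1 ∧ x.2 ≠ y.2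
  symm := ⟨fun x y h => ⟨h.1.symm, h.2.symm⟩⟩
  loopless := ⟨fun x h => h.1 rfl⟩

/-- `H` restricted to `S` is a disjoint union of `k`-cycles covering exactly the
vertices of `S`: the support of `H` is `S`, every vertex of `S` has exactly two
neighbours, and every connected component meeting `S` has exactly `k` vertices
(a finite connected 2-regular graph on `k` vertices is a `k`-cycle). -/
def IsUnionOfCycles {V : Type*} (H : SimpleGraph V) (S : Set V) (k : ℕ) : Prop :=
  (∀ v, v ∈ S ↔ (H.neighborSet v).Nonempty) ∧
  (∀ v ∈ S, (H.neighborSet v).ncard = 2) ∧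
  (∀ v ∈ S, {w | H.Reachable v w}.ncard = k)

/-- `H` is a partial `C_k`-factor of `G` (a graph on `[u] × [g]` with parts
`V_i = {i} × [g]`): it is a subgraph of `G` which is a disjoint union of
`k`-cycles covering all vertices outside exactly one part. -/
def IsPartialCkFactor {u g : ℕ} (G H : SimpleGraph (Fin u × Fin g)) (k : ℕ) : Prop :=
  H ≤ G ∧ ∃ i : Fin u, IsUnionOfCycles H {x | x.1 ≠ i} k

/-- A `k`-almost resolvable cycle system of `(K_u × K_g)(lam)` with `n` partial
`C_k`-factors: every member of the family is a partial `C_k`-factor and every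
edge of `K_u × K_g` lies in exactly `lam` of them. -/
def IsARCS (u g lam k n : ℕ) (H : Fin n → SimpleGraph (Fin u × Fin g)) : Prop :=
  (∀ m, IsPartialCkFactor (tensorK u g) (H m) k) ∧
  ∀ x y, (tensorK u g).Adj x y → ({m | (H m).Adj x y} : Set (Fin n)).ncard = lam

open Stmt10Aux in
/-- For `k ≡ 0 (mod 4)` and odd `t ≥ 3`, `K_{k+1} × K_t` has a partial
`C_k`-factorization into `(k+1)(t-1)/2` partial `C_k`-factors. -/
theorem stmt10 (k t : ℕ) (hk : 4 ∣ k) (hk0 : 0 < k) (ht : Odd t) (ht3 : 3 ≤ t) :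
    ∃ H : Fin ((k + 1) * (t - 1) / 2) → SimpleGraph (Fin (k + 1) × Fin t),
      IsARCS (k + 1) t 1 k ((k + 1) * (t - 1) / 2) H := by
  obtain ⟨u, rfl⟩ := hk
  have hu : 1 ≤ u := by omega
  obtain ⟨tt, rfl⟩ : ∃ tt, t = 2 * tt + 1 := by
    obtain ⟨j, hj⟩ := ht; exact ⟨j, by omega⟩
  have htt : 1 ≤ tt := by omega
  haveI hnz1 : NeZero (4 * u + 1) := ⟨by omega⟩
  haveI hnz2 : NeZero (2 * tt + 1) := ⟨by omega⟩
  have hN : (4 * u + 1) * (2 * tt + 1 - 1) / 2 = (4 * u + 1) * tt := by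
    rw [show 2 * tt + 1 - 1 = 2 * tt by omega,
      show (4 * u + 1) * (2 * tt) = (4 * u + 1) * tt * 2 by ring,
      Nat.mul_div_cancel _ two_pos]
  rw [hN]
  refine ⟨fun f => EG u tt ((f.val / tt : ℕ) : ZMod (4 * u + 1))
      ((f.val % tt + 1 : ℕ) : ZMod (2 * tt + 1)), ?_, ?_⟩
  · -- each member is a partial C_k factor
    intro f
    have hσv : (((f.val % tt + 1 : ℕ) : ZMod (2 * tt + 1))).val = f.val % tt + 1 :=
      ZMod.val_cast_of_lt (by have := Nat.mod_lt f.val (show 0 < tt by omega); omega)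
    have hσ0 : ((f.val % tt + 1 : ℕ) : ZMod (2 * tt + 1)) ≠ 0 := by
      intro h; rw [h, ZMod.val_zero] at hσv; omega
    refine ⟨?_, ?_⟩
    · -- subgraph
      intro x y hxy
      obtain ⟨m, hm, a, hor⟩ := (adj_iff hu).mp hxy
      have base : (tensorK (4 * u + 1) (2 * tt + 1)).Adj
          (cycg u tt ((f.val / tt : ℕ) : ZMod (4 * u + 1))
            ((f.val % tt + 1 : ℕ) : ZMod (2 * tt + 1)) m a)
          (cycg u tt ((f.val / tt : ℕ) : ZMod (4 * u + 1))
            ((f.val % tt + 1 : ℕ) : ZMod (2 * tt + 1)) (m + 1) a) := by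
        refine ⟨?_, ?_⟩
        · intro h
          simp only [cycg_fst] at h
          exact Pg_succ_ne hu m (add_left_cancel (show ((f.val / tt : ℕ) : ZMod (4 * u + 1)) + Pg u m
            = ((f.val / tt : ℕ) : ZMod (4 * u + 1)) + Pg u (m + 1) from h)).symm
        · intro h
          simp only [cycg_snd] at h
          have h2 : lvg tt ((f.val % tt + 1 : ℕ) : ZMod (2 * tt + 1)) m =
              lvg tt ((f.val % tt + 1 : ℕ) : ZMod (2 * tt + 1)) (m + 1) :=
            add_left_cancel h
          have h3 := lvg_succ_sub (σ := ((f.val % tt + 1 : ℕ) : ZMod (2 * tt + 1))) m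
          rw [← h2, sub_self] at h3
          split_ifs at h3 with hsp
          · exact hσ0 h3.symm
          · exact hσ0 (neg_eq_zero.mp h3.symm)
      rcases hor with ⟨rfl, rfl⟩ | ⟨rfl, rfl⟩
      · exact base
      · exact base.symm
    · -- union of cycles
      refine ⟨((f.val / tt : ℕ) : ZMod (4 * u + 1)), ?_, ?_, ?_⟩
      · intro v
        exact (support_iff hu v).symm
      · intro v hv
        obtain ⟨m, hm, a, rfl⟩ :=
          exists_rep (σ := ((f.val % tt + 1 : ℕ) : ZMod (2 * tt + 1))) hu v hv
        exact (congrArg Set.ncard (nbhd hu m a)).trans (Set.ncard_pair (nbhd_ne hu m a))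
      · intro v hv
        obtain ⟨m, hm, a, rfl⟩ :=
          exists_rep (σ := ((f.val % tt + 1 : ℕ) : ZMod (2 * tt + 1))) hu v hv
        exact reach_card hu m a
  · -- coverage: every edge in exactly one factor
    intro x y hxy
    obtain ⟨hD, hE⟩ := hxy
    set x1 : ZMod (4 * u + 1) := (x.1 : ZMod (4 * u + 1)) with hx1
    set y1 : ZMod (4 * u + 1) := (y.1 : ZMod (4 * u + 1)) with hy1
    set x2 : ZMod (2 * tt + 1) := (x.2 : ZMod (2 * tt + 1)) with hx2
    set y2 : ZMod (2 * tt + 1) := (y.2 : ZMod (2 * tt + 1)) with hy2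
    set Dv : ZMod (4 * u + 1) := y1 - x1 with hDv
    set Ev : ZMod (2 * tt + 1) := y2 - x2 with hEv
    have hDv0 : Dv ≠ 0 := sub_ne_zero.mpr (Ne.symm hD)
    have hEv0 : Ev ≠ 0 := sub_ne_zero.mpr (Ne.symm hE)
    have hEvlt : Ev.val < 2 * tt + 1 := ZMod.val_lt Ev
    have hEv1 : 1 ≤ Ev.val := Nat.pos_of_ne_zero (fun h => hEv0 ((ZMod.val_eq_zero Ev).mp h))
    set s0 : ℕ := if Ev.val ≤ tt then Ev.val - 1 else 2 * tt - Ev.val with hs0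
    have hs0lt : s0 < tt := by rw [hs0]; split_ifs <;> omega
    set σ0 : ZMod (2 * tt + 1) := ((s0 + 1 : ℕ) : ZMod (2 * tt + 1)) with hσ0
    have hσ0E1 : Ev.val ≤ tt → σ0 = Ev := by
      intro h
      rw [hσ0, hs0, if_pos h, show Ev.val - 1 + 1 = Ev.val by omega,
        ZMod.natCast_val, ZMod.cast_id]
    have hσ0E2 : ¬(Ev.val ≤ tt) → σ0 = -Ev := by
      intro h
      rw [hσ0, hs0, if_neg h]
      have hvc : ((Ev.val : ℕ) : ZMod (2 * tt + 1)) = Ev := by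
        rw [ZMod.natCast_val, ZMod.cast_id]
      rw [show (2 * tt - Ev.val) + 1 = 2 * tt + 1 - Ev.val by omega]
      have hz : ((2 * tt + 1 - Ev.val : ℕ) : ZMod (2 * tt + 1))
          + ((Ev.val : ℕ) : ZMod (2 * tt + 1)) = 0 := by
        rw [← Nat.cast_add, show 2 * tt + 1 - Ev.val + Ev.val = 2 * tt + 1 by omega,
          ZMod.natCast_self]
      rw [hvc] at hz
      linear_combination hz
    set W : ZMod (4 * u + 1) := if Ev.val ≤ tt then Dv else -Dv with hW
    have hW0 : W ≠ 0 := by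
      rw [hW]; split_ifs
      · exact hDv0
      · exact neg_ne_zero.mpr hDv0
    have hWv1 : 1 ≤ W.val := Nat.pos_of_ne_zero (fun h => hW0 ((ZMod.val_eq_zero W).mp h))
    have hWv2 : W.val ≤ 4 * u := by have := ZMod.val_lt W; omega
    set m0 : ℕ := Cinv u W.val with hm0
    obtain ⟨hm0lt, hCgm0⟩ : Cinv u W.val < 4 * u ∧ Cg u (Cinv u W.val) = W.val :=
      Cg_Cinv hu hWv1 hWv2
    rw [← hm0] at hm0lt hCgm0
    have hCgW : ((Cg u m0 : ℕ) : ZMod (4 * u + 1)) = W := by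
      rw [hCgm0, ZMod.natCast_val, ZMod.cast_id]
    set i0 : ZMod (4 * u + 1) :=
      if (Ev.val ≤ tt) ↔ (m0 % 2 = 0) then x1 - Pg u m0
      else y1 - Pg u m0 with hi0
    have hf0lt : i0.val * tt + s0 < (4 * u + 1) * tt := by
      have h1 : i0.val < 4 * u + 1 := ZMod.val_lt i0
      calc i0.val * tt + s0 < (i0.val + 1) * tt := by rw [add_mul, one_mul]; omega
        _ ≤ (4 * u + 1) * tt := Nat.mul_le_mul_right tt (by omega)
    set f0 : Fin ((4 * u + 1) * tt) := ⟨i0.val * tt + s0, hf0lt⟩ with hf0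
    have hdiv : f0.val / tt = i0.val := by
      show (i0.val * tt + s0) / tt = i0.val
      rw [mul_comm, Nat.mul_add_div (by omega), Nat.div_eq_of_lt hs0lt]
      omega
    have hmod : f0.val % tt = s0 := by
      show (i0.val * tt + s0) % tt = s0
      rw [mul_comm, Nat.mul_add_mod]
      exact Nat.mod_eq_of_lt hs0lt
    have hset : {f : Fin ((4 * u + 1) * tt) |
        (EG u tt ((f.val / tt : ℕ) : ZMod (4 * u + 1))
          ((f.val % tt + 1 : ℕ) : ZMod (2 * tt + 1))).Adj x y} = {f0} := by
      apply Set.eq_singleton_iff_unique_mem.mpr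
      constructor
      · -- existence
        show (EG u tt ((f0.val / tt : ℕ) : ZMod (4 * u + 1))
          ((f0.val % tt + 1 : ℕ) : ZMod (2 * tt + 1))).Adj x y
        have e1 : ((f0.val / tt : ℕ) : ZMod (4 * u + 1)) = i0 := by
          rw [hdiv, ZMod.natCast_val, ZMod.cast_id]
        have e2 : ((f0.val % tt + 1 : ℕ) : ZMod (2 * tt + 1)) = σ0 := by
          rw [hmod, hσ0]
        rw [e1, e2]
        have hPd := Pg_succ_sub (u := u) hu hm0lt
        by_cases hom : (Ev.val ≤ tt) ↔ (m0 % 2 = 0)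
        · have hi0if : i0 = x1 - Pg u m0 := by rw [hi0, if_pos hom]
          have hPD : Pg u (m0 + 1) - Pg u m0 =
              y1 - x1 := by
            rcases Nat.mod_two_eq_zero_or_one m0 with heven | hodd
            · have hτ : Ev.val ≤ tt := hom.mpr heven
              rw [hPd, if_pos heven, hCgW, hW, if_pos hτ]
            · have hτn : ¬(Ev.val ≤ tt) := fun hh => by omega
              rw [hPd, if_neg (by omega), hCgW, hW, if_neg hτn, neg_neg]
          have hED : lvg tt σ0 (m0 + 1) - lvg tt σ0 m0 =
              y2 - x2 := by
            rcases Nat.mod_two_eq_zero_or_one m0 with heven | hodd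
            · have hτ : Ev.val ≤ tt := hom.mpr heven
              rw [lvg_succ_sub, if_pos heven, hσ0E1 hτ]
            · have hτn : ¬(Ev.val ≤ tt) := fun hh => by omega
              rw [lvg_succ_sub, if_neg (by omega), hσ0E2 hτn, neg_neg]
          refine (adj_iff hu).mpr ⟨m0, hm0lt, x2 - lvg tt σ0 m0,
            Or.inl ⟨?_, ?_⟩⟩
          · refine Prod.ext_iff.mpr ⟨?_, ?_⟩
            · show x1 = _
              rw [cycg_fst, hi0if]; ring
            · show x2 = _
              rw [cycg_snd]; ring
          · refine Prod.ext_iff.mpr ⟨?_, ?_⟩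
            · show y1 = _
              rw [cycg_fst, hi0if]
              first | linear_combination hPD | linear_combination -hPD
            · show y2 = _
              rw [cycg_snd]
              first | linear_combination hED | linear_combination -hED
        · have hi0if : i0 = y1 - Pg u m0 := by rw [hi0, if_neg hom]
          have hPD : Pg u (m0 + 1) - Pg u m0 =
              x1 - y1 := by
            rcases Nat.mod_two_eq_zero_or_one m0 with heven | hodd
            · have hτn : ¬(Ev.val ≤ tt) := fun hh => hom (iff_of_true hh heven)
              rw [hPd, if_pos heven, hCgW, hW, if_neg hτn]; ring
            · have hτ : Ev.val ≤ tt := by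
                by_contra hh; exact hom (iff_of_false hh (by omega))
              rw [hPd, if_neg (by omega), hCgW, hW, if_pos hτ]; ring
          have hED : lvg tt σ0 (m0 + 1) - lvg tt σ0 m0 =
              x2 - y2 := by
            rcases Nat.mod_two_eq_zero_or_one m0 with heven | hodd
            · have hτn : ¬(Ev.val ≤ tt) := fun hh => hom (iff_of_true hh heven)
              rw [lvg_succ_sub, if_pos heven, hσ0E2 hτn]; ring
            · have hτ : Ev.val ≤ tt := by
                by_contra hh; exact hom (iff_of_false hh (by omega))
              rw [lvg_succ_sub, if_neg (by omega), hσ0E1 hτ]; ring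
          refine (adj_iff hu).mpr ⟨m0, hm0lt, y2 - lvg tt σ0 m0,
            Or.inr ⟨?_, ?_⟩⟩
          · refine Prod.ext_iff.mpr ⟨?_, ?_⟩
            · show y1 = _
              rw [cycg_fst, hi0if]; ring
            · show y2 = _
              rw [cycg_snd]; ring
          · refine Prod.ext_iff.mpr ⟨?_, ?_⟩
            · show x1 = _
              rw [cycg_fst, hi0if]
              first | linear_combination hPD | linear_combination -hPD
            · show x2 = _
              rw [cycg_snd]
              first | linear_combination hED | linear_combination -hED
      · -- uniqueness
        intro f hf
        have hf' : (EG u tt ((f.val / tt : ℕ) : ZMod (4 * u + 1))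
            ((f.val % tt + 1 : ℕ) : ZMod (2 * tt + 1))).Adj x y := hf
        obtain ⟨m, hm, a, hor⟩ := (adj_iff hu).mp hf'
        have hsflt : f.val % tt < tt := Nat.mod_lt _ (by omega)
        have hSfval : (((f.val % tt + 1 : ℕ) : ZMod (2 * tt + 1))).val = f.val % tt + 1 :=
          ZMod.val_cast_of_lt (by omega)
        have hfin : ∀ (hEval : Ev.val = f.val % tt + 1 ∨ Ev.val = 2 * tt - f.val % tt)
            (hm0m : m0 = m)
            (hio : i0 = ((f.val / tt : ℕ) : ZMod (4 * u + 1))), f = f0 := by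
          intro hEval hm0m hio
          apply Fin.ext
          show f.val = i0.val * tt + s0
          clear_value i0 s0
          have hdlt : f.val / tt < 4 * u + 1 :=
            (Nat.div_lt_iff_lt_mul (show 0 < tt by omega)).mpr f.isLt
          have hival : i0.val = f.val / tt := by
            rw [hio]; exact ZMod.val_cast_of_lt hdlt
          have hs0e : s0 = f.val % tt := by rw [hs0]; rcases hEval with h | h <;> split_ifs <;> omega
          rw [hival, hs0e]
          have hdm := Nat.div_add_mod f.val tt
          have h2 : f.val / tt * tt = tt * (f.val / tt) := Nat.mul_comm _ _
          omega
        rcases hor with ⟨h1, h2⟩ | ⟨h1, h2⟩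
        · -- x at m
          obtain ⟨e1, g1⟩ := Prod.ext_iff.mp h1
          obtain ⟨e2, g2⟩ := Prod.ext_iff.mp h2
          simp only [cycg_fst, cycg_snd] at e1 g1 e2 g2
          have e1' : x1 = ((f.val / tt : ℕ) : ZMod (4 * u + 1)) + Pg u m := e1
          have e2' : y1 = ((f.val / tt : ℕ) : ZMod (4 * u + 1)) + Pg u (m + 1) := e2
          have g1' : x2 = a + lvg tt ((f.val % tt + 1 : ℕ) : ZMod (2 * tt + 1)) m := g1
          have g2' : y2 = a + lvg tt ((f.val % tt + 1 : ℕ) : ZMod (2 * tt + 1)) (m + 1) := g2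
          have hDeq : (if m % 2 = 0 then ((Cg u m : ℕ) : ZMod (4 * u + 1))
              else -((Cg u m : ℕ) : ZMod (4 * u + 1))) = Dv := by
            rw [← Pg_succ_sub hu hm, hDv, e1', e2']; ring
          have hEeq : (if m % 2 = 0 then ((f.val % tt + 1 : ℕ) : ZMod (2 * tt + 1))
              else -((f.val % tt + 1 : ℕ) : ZMod (2 * tt + 1))) = Ev := by
            rw [← lvg_succ_sub, hEv, g1', g2']; ring
          rcases Nat.mod_two_eq_zero_or_one m with hpar | hpar
          · rw [if_pos hpar] at hDeq hEeq
            have hEval : Ev.val = f.val % tt + 1 := by rw [← hEeq]; exact hSfval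
            have hτ : Ev.val ≤ tt := by omega
            have hWeq : W = ((Cg u m : ℕ) : ZMod (4 * u + 1)) := by
              rw [hW, if_pos hτ, ← hDeq]
            have hCb := Cg_bound hu hm
            have hWv : W.val = Cg u m := by
              rw [hWeq]; exact ZMod.val_cast_of_lt (by omega)
            have hm0m : m0 = m := by rw [hm0, hWv]; exact Cinv_Cg hu hm
            have hom : (Ev.val ≤ tt) ↔ (m0 % 2 = 0) := by
              rw [hm0m]; exact iff_of_true hτ hpar
            have hio : i0 = ((f.val / tt : ℕ) : ZMod (4 * u + 1)) := by
              rw [hi0, if_pos hom, hm0m, e1']; try ring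
            exact hfin (Or.inl hEval) hm0m hio
          · rw [if_neg (by omega)] at hDeq hEeq
            have hEcast : Ev = ((2 * tt - f.val % tt : ℕ) : ZMod (2 * tt + 1)) := by
              rw [← hEeq, val_neg_cast hsflt]
            have hEval : Ev.val = 2 * tt - f.val % tt := by
              rw [hEcast]; exact ZMod.val_cast_of_lt (by omega)
            have hτn : ¬(Ev.val ≤ tt) := by omega
            have hWeq : W = ((Cg u m : ℕ) : ZMod (4 * u + 1)) := by
              rw [hW, if_neg hτn, ← hDeq, neg_neg]
            have hCb := Cg_bound hu hm
            have hWv : W.val = Cg u m := by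
              rw [hWeq]; exact ZMod.val_cast_of_lt (by omega)
            have hm0m : m0 = m := by rw [hm0, hWv]; exact Cinv_Cg hu hm
            have hom : (Ev.val ≤ tt) ↔ (m0 % 2 = 0) := by
              rw [hm0m]; exact iff_of_false hτn (by omega)
            have hio : i0 = ((f.val / tt : ℕ) : ZMod (4 * u + 1)) := by
              rw [hi0, if_pos hom, hm0m, e1']; try ring
            exact hfin (Or.inr hEval) hm0m hio
        · -- y at m
          obtain ⟨e1, g1⟩ := Prod.ext_iff.mp h1
          obtain ⟨e2, g2⟩ := Prod.ext_iff.mp h2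
          simp only [cycg_fst, cycg_snd] at e1 g1 e2 g2
          have e1' : y1 = ((f.val / tt : ℕ) : ZMod (4 * u + 1)) + Pg u m := e1
          have e2' : x1 = ((f.val / tt : ℕ) : ZMod (4 * u + 1)) + Pg u (m + 1) := e2
          have g1' : y2 = a + lvg tt ((f.val % tt + 1 : ℕ) : ZMod (2 * tt + 1)) m := g1
          have g2' : x2 = a + lvg tt ((f.val % tt + 1 : ℕ) : ZMod (2 * tt + 1)) (m + 1) := g2
          have hDeq : (if m % 2 = 0 then ((Cg u m : ℕ) : ZMod (4 * u + 1))
              else -((Cg u m : ℕ) : ZMod (4 * u + 1))) = -Dv := by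
            rw [← Pg_succ_sub hu hm, hDv, e1', e2']; ring
          have hEeq : (if m % 2 = 0 then ((f.val % tt + 1 : ℕ) : ZMod (2 * tt + 1))
              else -((f.val % tt + 1 : ℕ) : ZMod (2 * tt + 1))) = -Ev := by
            rw [← lvg_succ_sub, hEv, g1', g2']; ring
          rcases Nat.mod_two_eq_zero_or_one m with hpar | hpar
          · rw [if_pos hpar] at hDeq hEeq
            have hEcast : Ev = ((2 * tt - f.val % tt : ℕ) : ZMod (2 * tt + 1)) := by
              rw [← val_neg_cast hsflt, hEeq]
              try ring
            have hEval : Ev.val = 2 * tt - f.val % tt := by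
              rw [hEcast]; exact ZMod.val_cast_of_lt (by omega)
            have hτn : ¬(Ev.val ≤ tt) := by omega
            have hWeq : W = ((Cg u m : ℕ) : ZMod (4 * u + 1)) := by
              rw [hW, if_neg hτn, ← hDeq]; try ring
            have hCb := Cg_bound hu hm
            have hWv : W.val = Cg u m := by
              rw [hWeq]; exact ZMod.val_cast_of_lt (by omega)
            have hm0m : m0 = m := by rw [hm0, hWv]; exact Cinv_Cg hu hm
            have hom : ¬((Ev.val ≤ tt) ↔ (m0 % 2 = 0)) := by
              rw [hm0m]; intro hiff; exact hτn (hiff.mpr hpar)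
            have hio : i0 = ((f.val / tt : ℕ) : ZMod (4 * u + 1)) := by
              rw [hi0, if_neg hom, hm0m, e1']; try ring
            exact hfin (Or.inr hEval) hm0m hio
          · rw [if_neg (by omega)] at hDeq hEeq
            have hEveq : Ev = ((f.val % tt + 1 : ℕ) : ZMod (2 * tt + 1)) := by
              first | linear_combination hEeq | linear_combination -hEeq
            have hEval : Ev.val = f.val % tt + 1 := by rw [hEveq]; exact hSfval
            have hτ : Ev.val ≤ tt := by omega
            have hWeq : W = ((Cg u m : ℕ) : ZMod (4 * u + 1)) := by
              rw [hW, if_pos hτ]; first | linear_combination hDeq | linear_combination -hDeq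
            have hCb := Cg_bound hu hm
            have hWv : W.val = Cg u m := by
              rw [hWeq]; exact ZMod.val_cast_of_lt (by omega)
            have hm0m : m0 = m := by rw [hm0, hWv]; exact Cinv_Cg hu hm
            have hom : ¬((Ev.val ≤ tt) ↔ (m0 % 2 = 0)) := by
              rw [hm0m]; intro hiff; have := hiff.mp hτ; omega
            have hio : i0 = ((f.val / tt : ℕ) : ZMod (4 * u + 1)) := by
              rw [hi0, if_neg hom, hm0m, e1']; try ring
            exact hfin (Or.inl hEval) hm0m hio
    show ({f : Fin ((4 * u + 1) * tt) |
        (EG u tt ((f.val / tt : ℕ) : ZMod (4 * u + 1))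
          ((f.val % tt + 1 : ℕ) : ZMod (2 * tt + 1))).Adj x y}).ncard = 1
    rw [hset, Set.ncard_singleton]
end

section
/- For even k ≥ 4 and odd t ≥ 3, the tensor product C_k × K_t has a C_{kt}-factorization; in particular, its edge set can be partitioned into t−1 Hamilton cycles. -/
open SimpleGraph

/-- Tensor (categorical) product of simple graphs. -/
def tensorProd {α β : Type*} (G : SimpleGraph α) (H : SimpleGraph β) :
    SimpleGraph (α × β) where
  Adj x y := G.Adj x.1 y.1 ∧ H.Adj x.2 y.2
  symm := ⟨fun x y h => ⟨G.symm.symm _ _ h.1, H.symm.symm _ _ h.2⟩⟩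
  loopless := ⟨fun x h => G.loopless.irrefl x.1 h.1⟩

/-- The cycle graph `C_k` on vertex set `Fin k` (for `k ≥ 3`). -/
def cycleG (k : ℕ) : SimpleGraph (Fin k) :=
  SimpleGraph.fromRel (fun x y => (x.val + 1) % k = y.val)

namespace Stmt11

open Fin.NatCast Fin.CommRing

variable (k t : ℕ) [NeZero k] [NeZero t]

def lastF : Fin k := ⟨k - 1, Nat.sub_lt (NeZero.pos k) one_pos⟩

/-- difference of factor `m` at column `x` -/
def fm (m : ℕ) (x : Fin k) : Fin t :=
  if x = lastF k then (if m = 0 then 1 else -(m : Fin t))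
  else if Even x.val then ((m+1 : ℕ) : Fin t) else -((m+1 : ℕ) : Fin t)

/-- step along the `m`-th Hamilton cycle -/
def s (m : ℕ) (z : Fin k × Fin t) : Fin k × Fin t := (z.1 + 1, z.2 + fm k t m z.1)

def sInv (m : ℕ) (z : Fin k × Fin t) : Fin k × Fin t := (z.1 - 1, z.2 - fm k t m (z.1 - 1))

lemma sInv_s (m : ℕ) (z) : sInv k t m (s k t m z) = z := by
  simp [s, sInv]

lemma s_sInv (m : ℕ) (z) : s k t m (sInv k t m z) = z := by
  simp [s, sInv]

def HG (m : ℕ) : SimpleGraph (Fin k × Fin t) where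
  Adj x y := x ≠ y ∧ (y = s k t m x ∨ x = s k t m y)
  symm := ⟨fun x y h => ⟨h.1.symm, h.2.symm⟩⟩
  loopless := ⟨fun x h => h.1 rfl⟩

lemma one_val (h2 : 2 ≤ k) : (1 : Fin k).val = 1 := by
  have : ((1:ℕ) : Fin k).val = 1 := Fin.val_cast_of_lt (by omega)
  simpa using this

lemma add_one_ne (h2 : 2 ≤ k) (x : Fin k) : x + 1 ≠ x := by
  intro h
  have h1 : (1 : Fin k) = 0 := by
    have := add_left_cancel (a := x) (b := (1:Fin k)) (c := 0) (by simpa using h)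
    exact this
  have := one_val k h2
  rw [h1] at this
  simp at this

lemma add_two_ne (h4 : 4 ≤ k) (x : Fin k) : x + 1 + 1 ≠ x := by
  intro h
  rw [add_assoc] at h
  have h1 : (1 + 1 : Fin k) = 0 := add_left_cancel (a := x) (by simpa using h)
  have hv : ((2:ℕ) : Fin k).val = 2 := Fin.val_cast_of_lt (by omega)
  have : ((2:ℕ) : Fin k) = (1 + 1 : Fin k) := by push_cast; ring
  rw [this, h1] at hv
  simp at hv

lemma s_ne (h2 : 2 ≤ k) (m : ℕ) (z) : s k t m z ≠ z := by
  intro h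
  exact add_one_ne k h2 z.1 (congrArg Prod.fst h)

lemma iter_s (m n : ℕ) (z : Fin k × Fin t) :
    (s k t m)^[n] z = (z.1 + (n : Fin k),
      z.2 + ∑ j ∈ Finset.range n, fm k t m (z.1 + (j : Fin k))) := by
  induction n with
  | zero => simp
  | succ n ih =>
      rw [Function.iterate_succ_apply', ih, Finset.sum_range_succ]
      simp only [s, Prod.mk.injEq]
      constructor <;> push_cast <;> ring

def SS (m : ℕ) : Fin t := ∑ x : Fin k, fm k t m x

lemma sum_shift (m : ℕ) (x : Fin k) :
    ∑ j ∈ Finset.range k, fm k t m (x + (j : Fin k)) = SS k t m := by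
  rw [SS, ← Fin.sum_univ_eq_sum_range (fun j => fm k t m (x + (j : Fin k))) k]
  have := Equiv.sum_comp (Equiv.addLeft x) (fm k t m)
  simp only [Equiv.coe_addLeft] at this
  rw [← this]
  apply Finset.sum_congr rfl
  intro i _
  congr 1
  simp [Fin.cast_val_eq_self]

lemma iter_k (hk : Even k) (h4 : 4 ≤ k) (m : ℕ) (z) :
    (s k t m)^[k] z = (z.1, z.2 + SS k t m) := by
  rw [iter_s, sum_shift, Fin.natCast_self, add_zero]

lemma iter_k_mul (hk : Even k) (h4 : 4 ≤ k) (m n : ℕ) (z) :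
    (s k t m)^[k * n] z = (z.1, z.2 + n • SS k t m) := by
  induction n generalizing z with
  | zero => simp
  | succ n ih =>
      have hkn : k * (n+1) = k * n + k := by ring
      rw [hkn, Function.iterate_add_apply, iter_k k t hk h4, ih]
      simp only [Prod.mk.injEq, succ_nsmul, true_and]
      ring

lemma SS_val (hk : Even k) (h4 : 4 ≤ k) (m : ℕ) :
    SS k t m = (if m = 0 then 1 else -(m : Fin t)) + ((m+1:ℕ) : Fin t) := by
  have hodd : Odd (k - 1) := by
    rcases hk with ⟨c, hc⟩
    exact ⟨c - 1, by omega⟩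
  have key : ∀ x : Fin k, fm k t m x =
      (-1 : Fin t)^x.val * ((m+1:ℕ) : Fin t) +
      (if x = lastF k then ((if m = 0 then 1 else -(m : Fin t)) + ((m+1:ℕ) : Fin t)) else 0) := by
    intro x
    by_cases hx : x = lastF k
    · rw [fm, if_pos hx, if_pos hx, hx]
      have : (-1 : Fin t) ^ (lastF k).val = -1 := by
        rw [show (lastF k).val = k - 1 from rfl, Odd.neg_one_pow hodd]
      rw [this]; ring
    · rw [fm, if_neg hx, if_neg hx, add_zero]
      by_cases he : Even x.val
      · rw [if_pos he, Even.neg_one_pow he, one_mul]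
      · rw [if_neg he, Odd.neg_one_pow (Nat.not_even_iff_odd.mp he), neg_one_mul]
  rw [SS]
  rw [Finset.sum_congr rfl (fun x _ => key x)]
  rw [Finset.sum_add_distrib, Finset.sum_ite_eq' Finset.univ (lastF k)]
  simp only [Finset.mem_univ, if_true]
  have h1 : ∑ x : Fin k, (-1 : Fin t)^x.val * ((m+1:ℕ) : Fin t)
      = (∑ x : Fin k, (-1 : Fin t)^x.val) * ((m+1:ℕ) : Fin t) := by
    rw [Finset.sum_mul]
  rw [h1, Fin.sum_univ_eq_sum_range (fun j => (-1:Fin t)^j) k, neg_one_geom_sum,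
    if_pos hk, zero_mul, zero_add]

lemma SS_simple (hk : Even k) (h4 : 4 ≤ k) (m : ℕ) :
    SS k t m = if m = 0 then 2 else 1 := by
  rw [SS_val k t hk h4]
  by_cases hm : m = 0
  · subst hm; norm_num
  · rw [if_neg hm, if_neg hm]
    push_cast
    ring

lemma gen (ht : Odd t) (hk : Even k) (h4 : 4 ≤ k) (m : ℕ) (c : Fin t) :
    ∃ n : ℕ, n • SS k t m = c := by
  rw [SS_simple k t hk h4]
  by_cases hm : m = 0
  · rw [if_pos hm]
    refine ⟨c.val * ((t+1)/2), ?_⟩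
    have h2 : (t+1)/2 * 2 = t + 1 := by
      rcases ht with ⟨u, hu⟩; omega
    rw [nsmul_eq_mul]
    push_cast
    rw [mul_assoc]
    have : ((((t+1)/2 : ℕ)) : Fin t) * 2 = 1 := by
      have : ((((t+1)/2 : ℕ)) : Fin t) * 2 = (((t+1)/2 * 2 : ℕ) : Fin t) := by push_cast; ring
      rw [this, h2]
      push_cast
      rw [Fin.natCast_self]
      ring
    rw [this, mul_one]
  · rw [if_neg hm]
    exact ⟨c.val, by rw [nsmul_eq_mul, mul_one, Fin.cast_val_eq_self]⟩

lemma reach_iter (h2 : 2 ≤ k) (m n : ℕ) (v) : (HG k t m).Reachable v ((s k t m)^[n] v) := by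
  induction n with
  | zero => rw [Function.iterate_zero_apply]
  | succ n ih =>
      refine ih.trans (SimpleGraph.Adj.reachable ?_)
      rw [Function.iterate_succ_apply']
      exact ⟨(s_ne k t h2 m _).symm, Or.inl rfl⟩

lemma reach_all (hk : Even k) (h4 : 4 ≤ k) (ht : Odd t) (m : ℕ) (v w : Fin k × Fin t) :
    (HG k t m).Reachable v w := by
  set n₁ := (w.1 - v.1).val with hn₁
  set c : Fin t := v.2 + ∑ j ∈ Finset.range n₁, fm k t m (v.1 + (j : Fin k)) with hc
  have h1 : (s k t m)^[n₁] v = (w.1, c) := by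
    rw [iter_s, ← hc]
    have : v.1 + ((n₁ : ℕ) : Fin k) = w.1 := by
      rw [hn₁, Fin.cast_val_eq_self]; ring
    rw [this]
  obtain ⟨n₂, hn₂⟩ := gen k t ht hk h4 m (w.2 - c)
  have h2 : (s k t m)^[k * n₂ + n₁] v = w := by
    rw [Function.iterate_add_apply, h1, iter_k_mul k t hk h4, hn₂]
    simp
  have := reach_iter k t (by omega) m (k * n₂ + n₁) v
  rwa [h2] at this

lemma cast_inj_lt {a b : ℕ} (ha : a < t) (hb : b < t) (h : (a : Fin t) = b) : a = b := by
  have := congrArg Fin.val h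
  rwa [Fin.val_cast_of_lt ha, Fin.val_cast_of_lt hb] at this

lemma euA (ht3 : 3 ≤ t) (c : Fin t) (hc : c ≠ 0) :
    ∃! m : Fin (t-1), ((m.val + 1 : ℕ) : Fin t) = c := by
  have hcv : c.val ≠ 0 := fun h => hc (Fin.ext h)
  have hct : c.val < t := c.isLt
  set m₀ : Fin (t-1) := ⟨c.val - 1, by omega⟩ with hm₀
  have hm₀v : m₀.val = c.val - 1 := rfl
  refine ⟨m₀, ?_, ?_⟩
  · show ((m₀.val + 1 : ℕ) : Fin t) = c
    rw [hm₀v, Nat.sub_add_cancel (by omega), Fin.cast_val_eq_self]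
  · intro m hm
    have hm' : ((m.val + 1 : ℕ) : Fin t) = c := hm
    have hmlt : m.val < t - 1 := m.isLt
    have heq : m.val + 1 = c.val := by
      apply cast_inj_lt t (by omega) hct
      rw [hm', Fin.cast_val_eq_self]
    apply Fin.ext
    rw [hm₀v]; omega

lemma euB (ht3 : 3 ≤ t) (c : Fin t) (hc : c ≠ 0) :
    ∃! m : Fin (t-1), -((m.val + 1 : ℕ) : Fin t) = c := by
  obtain ⟨m₀, hm₀, hu⟩ := euA t ht3 (-c) (neg_ne_zero.mpr hc)
  have hm₀' : ((m₀.val + 1 : ℕ) : Fin t) = -c := hm₀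
  refine ⟨m₀, ?_, ?_⟩
  · show -((m₀.val + 1 : ℕ) : Fin t) = c
    rw [hm₀', neg_neg]
  · intro m hm
    have hm' : -((m.val + 1 : ℕ) : Fin t) = c := hm
    exact hu m (by rw [← hm', neg_neg])

lemma val_one (ht3 : 3 ≤ t) : (1 : Fin t).val = 1 := by
  have : ((1:ℕ) : Fin t).val = 1 := Fin.val_cast_of_lt (by omega)
  simpa using this

lemma euC (ht3 : 3 ≤ t) (c : Fin t) (hc : c ≠ 0) :
    ∃! m : Fin (t-1), (if m.val = 0 then (1 : Fin t) else -(m.val : Fin t)) = c := by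
  have hcv : c.val ≠ 0 := fun h => hc (Fin.ext h)
  have hct : c.val < t := c.isLt
  by_cases hc1 : c = 1
  · refine ⟨⟨0, by omega⟩, by simpa using hc1.symm, ?_⟩
    intro m hm
    have hm' : (if m.val = 0 then (1 : Fin t) else -(m.val : Fin t)) = c := hm
    by_cases hm0 : m.val = 0
    · exact Fin.ext hm0
    · exfalso
      rw [if_neg hm0, hc1] at hm'
      have h1 : ((m.val : Fin t)) = -1 := neg_eq_iff_eq_neg.mp hm'
      have h2 : ((m.val + 1 : ℕ) : Fin t) = 0 := by push_cast [h1]; ring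
      have h3 : t ∣ m.val + 1 := (CharP.cast_eq_zero_iff (Fin t) t _).mp h2
      have hmlt : m.val < t - 1 := m.isLt
      have := Nat.le_of_dvd (by omega) h3
      omega
  · have hcv1 : c.val ≠ 1 := fun h => hc1 (Fin.ext (by rw [h, val_one t ht3]))
    have key : -(((t - c.val : ℕ)) : Fin t) = c := by
      have hadd : ((t - c.val : ℕ) : Fin t) + ((c.val : ℕ) : Fin t) = 0 := by
        rw [← Nat.cast_add, Nat.sub_add_cancel (le_of_lt hct), Fin.natCast_self]
      rw [Fin.cast_val_eq_self] at hadd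
      exact neg_eq_of_add_eq_zero_right hadd
    set m₀ : Fin (t-1) := ⟨t - c.val, by omega⟩ with hm₀
    have hm₀v : m₀.val = t - c.val := rfl
    refine ⟨m₀, ?_, ?_⟩
    · show (if m₀.val = 0 then (1 : Fin t) else -(m₀.val : Fin t)) = c
      rw [hm₀v, if_neg (by omega)]
      exact key
    · intro m hm
      have hm' : (if m.val = 0 then (1 : Fin t) else -(m.val : Fin t)) = c := hm
      by_cases hm0 : m.val = 0
      · exfalso
        rw [if_pos hm0] at hm'
        exact hcv1 (by rw [← hm', val_one t ht3])
      · rw [if_neg hm0] at hm'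
        have hmlt : m.val < t - 1 := m.isLt
        have hcast : (m.val : Fin t) = ((t - c.val : ℕ) : Fin t) := by
          rw [← neg_inj, hm', key]
        apply Fin.ext
        rw [hm₀v]
        exact cast_inj_lt t (by omega) (by omega) hcast

lemma eu_fm (ht3 : 3 ≤ t) (x : Fin k) (c : Fin t) (hc : c ≠ 0) :
    ∃! m : Fin (t-1), fm k t m.val x = c := by
  by_cases hx : x = lastF k
  · simp only [fm, if_pos hx]
    exact euC t ht3 c hc
  · simp only [fm, if_neg hx]
    by_cases he : Even x.val
    · simp only [if_pos he]
      exact euA t ht3 c hc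
    · simp only [if_neg he]
      exact euB t ht3 c hc

lemma fm_ne_zero (ht3 : 3 ≤ t) (m : ℕ) (hm : m < t - 1) (x : Fin k) :
    fm k t m x ≠ 0 := by
  have hcast : ∀ a : ℕ, a ≠ 0 → a < t → ((a : ℕ) : Fin t) ≠ 0 := by
    intro a ha halt h
    have := congrArg Fin.val h
    rw [Fin.val_cast_of_lt halt] at this
    simp at this
    omega
  rw [fm]
  split
  · split
    · intro h
      have := congrArg Fin.val h
      rw [val_one t ht3] at this
      simp at this
    · next hm0 =>
        exact neg_ne_zero.mpr (hcast m hm0 (by omega))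
  · split
    · exact hcast (m+1) (by omega) (by omega)
    · exact neg_ne_zero.mpr (hcast (m+1) (by omega) (by omega))

lemma cyc_adj (h2 : 2 ≤ k) (x y : Fin k) :
    (cycleG k).Adj x y ↔ x ≠ y ∧ (y = x + 1 ∨ x = y + 1) := by
  have hadd : ∀ a : Fin k, (a + 1).val = (a.val + 1) % k := by
    intro a
    rw [Fin.add_def, one_val k h2]
  rw [cycleG, SimpleGraph.fromRel_adj]
  constructor
  · rintro ⟨hne, h | h⟩
    · exact ⟨hne, Or.inl (Fin.ext (by rw [hadd, h])).symm⟩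
    · exact ⟨hne, Or.inr (Fin.ext (by rw [hadd, h])).symm⟩
  · rintro ⟨hne, h | h⟩
    · exact ⟨hne, Or.inl (by rw [h, hadd])⟩
    · exact ⟨hne, Or.inr (by rw [h, hadd])⟩

lemma HG_le (h4 : 4 ≤ k) (ht3 : 3 ≤ t) (m : ℕ) (hm : m < t - 1) :
    HG k t m ≤ tensorProd (cycleG k) (⊤ : SimpleGraph (Fin t)) := by
  have key : ∀ z : Fin k × Fin t,
      (tensorProd (cycleG k) (⊤ : SimpleGraph (Fin t))).Adj z (s k t m z) := by
    intro z
    refine ⟨?_, ?_⟩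
    · show (cycleG k).Adj z.1 (z.1 + 1)
      rw [cyc_adj k (by omega)]
      exact ⟨(add_one_ne k (by omega) z.1).symm, Or.inl rfl⟩
    · show z.2 ≠ z.2 + fm k t m z.1
      intro h
      exact fm_ne_zero k t ht3 m hm z.1 (by simpa using (left_eq_add.mp h))
  rintro x y ⟨hne, h | h⟩
  · rw [h]; exact key x
  · rw [h]; exact (key y).symm

lemma adj_iff (h4 : 4 ≤ k) (m : ℕ) (x : Fin k) (a b : Fin t) :
    (HG k t m).Adj (x, a) (x + 1, b) ↔ fm k t m x = b - a := by
  constructor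
  · rintro ⟨hne, h | h⟩
    · have hb : b = a + fm k t m x := congrArg Prod.snd h
      rw [hb]; ring
    · exfalso
      have hx : x = x + 1 + 1 := congrArg Prod.fst h
      exact add_two_ne k h4 x hx.symm
  · intro h
    refine ⟨?_, Or.inl ?_⟩
    · intro he
      exact add_one_ne k (by omega) x (congrArg Prod.fst he).symm
    · show (x + 1, b) = (x + 1, a + fm k t m x)
      rw [h]
      simp

lemma nbhd_eq (h2 : 2 ≤ k) (m : ℕ) (v : Fin k × Fin t) :
    (HG k t m).neighborSet v = {s k t m v, sInv k t m v} := by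
  ext w
  have hmem : w ∈ ({s k t m v, sInv k t m v} : Set (Fin k × Fin t))
      ↔ (w = s k t m v ∨ w = sInv k t m v) := by
    simp [Set.mem_insert_iff]
  rw [hmem]
  show (v ≠ w ∧ (w = s k t m v ∨ v = s k t m w)) ↔ _
  constructor
  · rintro ⟨hne, h | h⟩
    · exact Or.inl h
    · exact Or.inr (by rw [h, sInv_s])
  · rintro (h | h)
    · exact ⟨fun he => s_ne k t h2 m v (he.trans h).symm, Or.inl h⟩
    · refine ⟨?_, Or.inr (by rw [h, s_sInv])⟩
      intro he
      exact s_ne k t h2 m v ((congrArg (s k t m) (he.trans h)).trans (s_sInv k t m v))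

lemma nbhd_ncard (h4 : 4 ≤ k) (m : ℕ) (v : Fin k × Fin t) :
    ((HG k t m).neighborSet v).ncard = 2 := by
  rw [nbhd_eq k t (by omega)]
  apply Set.ncard_pair
  intro h
  have h2 : s k t m (s k t m v) = v := by
    conv_lhs => rw [h]
    exact s_sInv k t m v
  exact add_two_ne k h4 v.1 (congrArg Prod.fst h2)

theorem main (k t : ℕ) (hk : Even k) (hk4 : 4 ≤ k) (ht : Odd t) (ht3 : 3 ≤ t) :
    ∃ H : Fin (t - 1) → SimpleGraph (Fin k × Fin t),
      (∀ m, H m ≤ tensorProd (cycleG k) (⊤ : SimpleGraph (Fin t)) ∧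
        IsUnionOfCycles (H m) Set.univ (k * t)) ∧
      ∀ x y : Fin k × Fin t,
        (tensorProd (cycleG k) (⊤ : SimpleGraph (Fin t))).Adj x y →
          ({m | (H m).Adj x y} : Set (Fin (t - 1))).ncard = 1 := by
  haveI : NeZero k := ⟨by omega⟩
  haveI : NeZero t := ⟨by omega⟩
  refine ⟨fun m => HG k t m.val, fun m => ⟨HG_le k t hk4 ht3 m.val m.isLt, ?_, ?_, ?_⟩, ?_⟩
  · intro v
    constructor
    · intro _
      exact ⟨s k t m.val v, by rw [nbhd_eq k t (by omega)]; exact Set.mem_insert _ _⟩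
    · intro _
      trivial
  · intro v _
    exact nbhd_ncard k t hk4 m.val v
  · intro v _
    have : {w | (HG k t m.val).Reachable v w} = Set.univ := by
      ext w
      exact ⟨fun _ => trivial, fun _ => reach_all k t hk hk4 ht m.val v w⟩
    rw [this, Set.ncard_univ]
    simp [Nat.card_eq_fintype_card]
  · rintro ⟨x, a⟩ ⟨y, b⟩ ⟨hcyc, hne⟩
    have hne' : a ≠ b := hne
    rw [cyc_adj k (by omega)] at hcyc
    obtain ⟨-, h | h⟩ := hcyc
    · subst h
      have hset : {m : Fin (t-1) | (HG k t m.val).Adj (x, a) (x + 1, b)}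
          = {m : Fin (t-1) | fm k t m.val x = b - a} := by
        ext m
        exact adj_iff k t hk4 m.val x a b
      rw [hset]
      obtain ⟨m₀, hm₀, hu⟩ := eu_fm k t ht3 x (b - a) (sub_ne_zero.mpr (Ne.symm hne'))
      rw [show {m : Fin (t-1) | fm k t m.val x = b - a} = {m₀} from
        Set.eq_singleton_iff_unique_mem.mpr ⟨hm₀, hu⟩]
      exact Set.ncard_singleton m₀
    · subst h
      have hset : {m : Fin (t-1) | (HG k t m.val).Adj (y + 1, a) (y, b)}
          = {m : Fin (t-1) | fm k t m.val y = a - b} := by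
        ext m
        show (HG k t m.val).Adj (y + 1, a) (y, b) ↔ _
        rw [SimpleGraph.adj_comm]
        exact adj_iff k t hk4 m.val y b a
      rw [hset]
      obtain ⟨m₀, hm₀, hu⟩ := eu_fm k t ht3 y (a - b) (sub_ne_zero.mpr hne')
      rw [show {m : Fin (t-1) | fm k t m.val y = a - b} = {m₀} from
        Set.eq_singleton_iff_unique_mem.mpr ⟨hm₀, hu⟩]
      exact Set.ncard_singleton m₀

end Stmt11

/-- For even `k ≥ 4` and odd `t ≥ 3`, the edge set of `C_k × K_t` partitions
into `t - 1` Hamilton cycles (i.e. it has a `C_{kt}`-factorization). -/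
theorem stmt11 (k t : ℕ) (hk : Even k) (hk4 : 4 ≤ k) (ht : Odd t) (ht3 : 3 ≤ t) :
    ∃ H : Fin (t - 1) → SimpleGraph (Fin k × Fin t),
      (∀ m, H m ≤ tensorProd (cycleG k) (⊤ : SimpleGraph (Fin t)) ∧
        IsUnionOfCycles (H m) Set.univ (k * t)) ∧
      ∀ x y : Fin k × Fin t,
        (tensorProd (cycleG k) (⊤ : SimpleGraph (Fin t))).Adj x y →
          ({m | (H m).Adj x y} : Set (Fin (t - 1))).ncard = 1 := by
  exact Stmt11.main k t hk hk4 ht ht3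
end

section
/- For k ≡ 0 (mod 4), k ≥ 4, and odd g ≥ 3, the graph K_{k+1} × K_g admits a k-almost resolvable cycle system: its edge set partitions into (k+1)(g−1)/2 partial C_k-factors. -/
open SimpleGraph

namespace S17

lemma mod_two_n {a n : ℕ} (h : a < 2*n) : a % n = if a < n then a else a - n := by
  split_ifs with hlt
  · exact Nat.mod_eq_of_lt hlt
  · rw [Nat.mod_eq_sub_mod (by omega), Nat.mod_eq_of_lt (by omega)]

variable (k : ℕ)

/-- the part-sequence of the base cycle -/
def P (s : ZMod k) : ZMod (k+1) :=
  (if s.val ≤ k/2 then 1 else 0) - (-1)^(s.val) * (s.val : ZMod (k+1))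

/-- the arc-difference sequence -/
def Dz (s : ZMod k) : ZMod (k+1) :=
  if s.val = k/2 then -1 else ((2*s.val+1 : ℕ) : ZMod (k+1))

/-- direction signs -/
def eps (s : ZMod k) : ℤ := (-1)^(s.val)

lemma eps_eq_one_or (s : ZMod k) : eps k s = 1 ∨ eps k s = -1 := by
  unfold eps
  rcases Nat.even_or_odd s.val with h | h
  · left; exact h.neg_one_pow
  · right; exact h.neg_one_pow

lemma eps_sq (s : ZMod k) : eps k s * eps k s = 1 := by
  rcases eps_eq_one_or k s with h | h <;> rw [h] <;> norm_num

lemma kcast : ((k : ZMod (k+1))) = -1 := by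
  have h0 : (((k+1 : ℕ)) : ZMod (k+1)) = 0 := ZMod.natCast_self (k+1)
  push_cast at h0
  linear_combination h0

/-- natural-number value of P -/
def pv (v : ℕ) : ℕ :=
  if v % 2 = 1 then (if v ≤ k/2 then v+1 else v)
  else (if v = 0 then 1 else if v ≤ k/2 then k+2-v else k+1-v)

section hk
variable (hk4 : 4 ∣ k) (hk : 4 ≤ k)

lemma P_val_aux (hk : 4 ≤ k) (v : ℕ) (hv : v < k) :
    ((if v ≤ k/2 then 1 else 0) - (-1)^v * (v : ZMod (k+1))).val = pv k v := by
  have hkc := kcast k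
  unfold pv
  rcases Nat.even_or_odd v with he | ho
  · have h2 : ¬ (v % 2 = 1) := by rw [Nat.even_iff] at he; omega
    rw [if_neg h2, he.neg_one_pow]
    rcases Nat.eq_zero_or_pos v with rfl | hv0
    · have : Fact (1 < k+1) := ⟨by omega⟩
      simp [ZMod.val_one]
    have hv2 : 2 ≤ v := by omega
    by_cases hle : v ≤ k/2
    · rw [if_pos hle, if_neg (by omega), if_pos hle]
      have hc : (1 : ZMod (k+1)) - 1 * (v : ZMod (k+1)) = ((k+2-v : ℕ) : ZMod (k+1)) := by
        push_cast [Nat.cast_sub (by omega : v ≤ k+2)]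
        linear_combination -hkc
      rw [hc, ZMod.val_cast_of_lt (by omega)]
    · rw [if_neg hle, if_neg (by omega), if_neg hle]
      have hc : (0 : ZMod (k+1)) - 1 * (v : ZMod (k+1)) = ((k+1-v : ℕ) : ZMod (k+1)) := by
        push_cast [Nat.cast_sub (by omega : v ≤ k+1)]
        linear_combination -hkc
      rw [hc, ZMod.val_cast_of_lt (by omega)]
  · have h2 : v % 2 = 1 := Nat.odd_iff.mp ho
    rw [if_pos h2, ho.neg_one_pow]
    by_cases hle : v ≤ k/2
    · rw [if_pos hle, if_pos hle]
      have hc : (1 : ZMod (k+1)) - (-1) * (v : ZMod (k+1)) = ((v+1 : ℕ) : ZMod (k+1)) := by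
        push_cast; ring
      rw [hc, ZMod.val_cast_of_lt (by omega)]
    · rw [if_neg hle, if_neg hle]
      have hc : (0 : ZMod (k+1)) - (-1) * (v : ZMod (k+1)) = ((v : ℕ) : ZMod (k+1)) := by
        push_cast; ring
      rw [hc, ZMod.val_cast_of_lt (by omega)]

include hk in
lemma P_val (s : ZMod k) : (P k s).val = pv k s.val := by
  have : NeZero k := ⟨by omega⟩
  exact P_val_aux k hk s.val (ZMod.val_lt s)

include hk4 hk in
lemma P_inj : Function.Injective (P k) := by
  have : NeZero k := ⟨by omega⟩
  intro s t h
  have hs := P_val k hk s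
  have ht := P_val k hk t
  have hv : pv k s.val = pv k t.val := by rw [← hs, ← ht, h]
  have hsv : s.val < k := ZMod.val_lt s
  have htv : t.val < k := ZMod.val_lt t
  have : s.val = t.val := by
    obtain ⟨c, rfl⟩ := hk4
    unfold pv at hv
    split_ifs at hv <;> omega
  exact ZMod.val_injective k this

include hk in
lemma P_ne_zero (s : ZMod k) : P k s ≠ 0 := by
  have : NeZero k := ⟨by omega⟩
  intro h
  have := P_val k hk s
  rw [h, ZMod.val_zero] at this
  have hsv : s.val < k := ZMod.val_lt s
  unfold pv at this
  split_ifs at this <;> omega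

include hk4 hk in
lemma P_surj {c : ZMod (k+1)} (hc : c ≠ 0) : ∃ s, P k s = c := by
  have : NeZero k := ⟨by omega⟩
  classical
  have hsub : Finset.univ.image (P k) ⊆ Finset.univ.erase 0 := by
    intro x hx
    simp only [Finset.mem_image] at hx
    obtain ⟨s, _, rfl⟩ := hx
    exact Finset.mem_erase.mpr ⟨P_ne_zero k hk s, Finset.mem_univ _⟩
  have hcard : (Finset.univ.erase (0 : ZMod (k+1))).card ≤ (Finset.univ.image (P k)).card := by
    rw [Finset.card_image_of_injective _ (P_inj k hk4 hk), Finset.card_erase_of_mem (Finset.mem_univ _)]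
    simp [ZMod.card]
  have heq := Finset.eq_of_subset_of_card_le hsub hcard
  have : c ∈ Finset.univ.image (P k) := by
    rw [heq]; exact Finset.mem_erase.mpr ⟨hc, Finset.mem_univ _⟩
  simpa using this

end hk
end S17

namespace S17B
open S17
variable (k : ℕ) (hk4 : 4 ∣ k) (hk : 4 ≤ k)

include hk in
lemma val_succ (s : ZMod k) : (s+1).val = if s.val = k-1 then 0 else s.val + 1 := by
  have : NeZero k := ⟨by omega⟩
  have : Fact (1 < k) := ⟨by omega⟩
  have hv : s.val < k := ZMod.val_lt s
  rw [ZMod.val_add, ZMod.val_one]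
  split_ifs with h
  · have h2 : s.val + 1 = k := by omega
    rw [h2, Nat.mod_self]
  · exact Nat.mod_eq_of_lt (by omega)

include hk in
lemma Dz_val (s : ZMod k) :
    (Dz k s).val = if s.val = k/2 then k
      else (if 2*s.val+1 < k+1 then 2*s.val+1 else 2*s.val+1 - (k+1)) := by
  have : NeZero k := ⟨by omega⟩
  unfold Dz
  split_ifs with h h2
  · exact ZMod.val_neg_one k
  · rw [ZMod.val_natCast, Nat.mod_eq_of_lt h2]
  · rw [ZMod.val_natCast, Nat.mod_eq_sub_mod (by omega),
      Nat.mod_eq_of_lt (by have := ZMod.val_lt s; omega)]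

include hk4 hk in
lemma Dz_inj : Function.Injective (Dz k) := by
  have : NeZero k := ⟨by omega⟩
  intro s t h
  have hs := Dz_val k hk s
  have ht := Dz_val k hk t
  have hv : (Dz k s).val = (Dz k t).val := by rw [h]
  rw [hs, ht] at hv
  have hsv : s.val < k := ZMod.val_lt s
  have htv : t.val < k := ZMod.val_lt t
  obtain ⟨c, rfl⟩ := hk4
  apply ZMod.val_injective
  split_ifs at hv <;> omega

include hk4 hk in
lemma Dz_ne_zero (s : ZMod k) : Dz k s ≠ 0 := by
  have : NeZero k := ⟨by omega⟩
  intro h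
  have := Dz_val k hk s
  rw [h, ZMod.val_zero] at this
  have hsv : s.val < k := ZMod.val_lt s
  obtain ⟨c, rfl⟩ := hk4
  split_ifs at this <;> omega

include hk4 hk in
lemma Dz_surj {c : ZMod (k+1)} (hc : c ≠ 0) : ∃ s, Dz k s = c := by
  have : NeZero k := ⟨by omega⟩
  classical
  have hsub : Finset.univ.image (Dz k) ⊆ Finset.univ.erase 0 := by
    intro x hx
    simp only [Finset.mem_image] at hx
    obtain ⟨s, _, rfl⟩ := hx
    exact Finset.mem_erase.mpr ⟨Dz_ne_zero k hk4 hk s, Finset.mem_univ _⟩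
  have hcard : (Finset.univ.erase (0 : ZMod (k+1))).card ≤ (Finset.univ.image (Dz k)).card := by
    rw [Finset.card_image_of_injective _ (Dz_inj k hk4 hk),
      Finset.card_erase_of_mem (Finset.mem_univ _)]
    simp [ZMod.card]
  have heq := Finset.eq_of_subset_of_card_le hsub hcard
  have : c ∈ Finset.univ.image (Dz k) := by
    rw [heq]; exact Finset.mem_erase.mpr ⟨hc, Finset.mem_univ _⟩
  simpa using this

lemma key (hk4 : 4 ∣ k) (hk : 4 ≤ k) (s : ZMod k) :
    P k (s+1) - P k s = ((eps k s : ℤ) : ZMod (k+1)) * Dz k s := by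
  have : NeZero k := ⟨by omega⟩
  have hv : s.val < k := ZMod.val_lt s
  have hkc := kcast k
  have hsucc := val_succ k hk s
  obtain ⟨c, rfl⟩ := hk4
  have hc1 : 1 ≤ c := by omega
  push_cast at hkc
  unfold P Dz eps
  by_cases hw : s.val = 4*c-1
  · rw [hsucc, if_pos hw]
    have hodd : Odd s.val := by rw [Nat.odd_iff]; omega
    simp only [hodd.neg_one_pow]
    rw [if_neg (show ¬ s.val = 4*c/2 by omega),
      if_pos (by omega : (0:ℕ) ≤ 4*c/2), if_neg (show ¬ s.val ≤ 4*c/2 by omega), hw]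
    push_cast [Nat.cast_sub (by omega : 1 ≤ 4*c)]
    linear_combination hkc
  · rw [hsucc, if_neg hw]
    by_cases hm : s.val = 4*c/2
    · have heven : Even s.val := by rw [Nat.even_iff]; omega
      have hm' : s.val = 2*c := by omega
      simp only [pow_succ, heven.neg_one_pow]
      rw [if_pos hm, if_pos (by omega : s.val ≤ 4*c/2),
        if_neg (by omega : ¬ s.val + 1 ≤ 4*c/2), hm']
      push_cast
      linear_combination hkc
    · rw [if_neg hm]
      simp only [pow_succ]
      by_cases hle : s.val ≤ 4*c/2
      · rw [if_pos hle, if_pos (by omega : s.val + 1 ≤ 4*c/2)]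
        push_cast
        ring
      · rw [if_neg hle, if_neg (by omega : ¬ s.val + 1 ≤ 4*c/2)]
        push_cast
        ring

end S17B

namespace S17
open S17B

variable (k g : ℕ)

/-- the base relation of the factor `(i,d)`: `y` is the successor-translate of `x`. -/
def Rel (i : ZMod (k+1)) (d : ℕ) (x y : ZMod (k+1) × ZMod g) : Prop :=
  ∃ s : ZMod k, x.1 = i + P k s ∧ y.1 = i + P k (s+1) ∧
    y.2 = x.2 + ((eps k s : ℤ) : ZMod g) * (d : ZMod g)

/-- the factor graph -/
def F (i : ZMod (k+1)) (d : ℕ) : SimpleGraph (ZMod (k+1) × ZMod g) :=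
  SimpleGraph.fromRel (Rel k g i d)

section ranges
variable (hg3 : 3 ≤ g)

include hg3 in
lemma cast_inj_range {d1 d2 : ℕ} (h1 : d1 < g) (h2 : d2 < g)
    (h : (d1 : ZMod g) = (d2 : ZMod g)) : d1 = d2 := by
  have : NeZero g := ⟨by omega⟩
  have := congrArg ZMod.val h
  rwa [ZMod.val_cast_of_lt h1, ZMod.val_cast_of_lt h2] at this

include hg3 in
lemma cast_ne_neg {d1 d2 : ℕ} (h1a : 1 ≤ d1) (h1 : d1 ≤ (g-1)/2)
    (h2a : 1 ≤ d2) (h2 : d2 ≤ (g-1)/2) :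
    (d1 : ZMod g) ≠ -(d2 : ZMod g) := by
  have : NeZero g := ⟨by omega⟩
  intro h
  have hv := congrArg ZMod.val h
  have hd2v : ((d2 : ZMod g)).val = d2 := ZMod.val_cast_of_lt (by omega)
  have hne : (d2 : ZMod g) ≠ 0 := by
    intro h0
    have := congrArg ZMod.val h0
    rw [hd2v, ZMod.val_zero] at this
    omega
  rw [ZMod.val_cast_of_lt (by omega : d1 < g), ZMod.neg_val, if_neg hne, hd2v] at hv
  omega

include hg3 in
lemma dcast_ne_zero {d : ℕ} (h1 : 1 ≤ d) (h2 : d ≤ (g-1)/2) : (d : ZMod g) ≠ 0 := by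
  have : NeZero g := ⟨by omega⟩
  intro h
  have := congrArg ZMod.val h
  rw [ZMod.val_cast_of_lt (by omega : d < g), ZMod.val_zero] at this
  omega

include hg3 in
lemma sign_resolve {σ τ : ℤ} (hσ : σ = 1 ∨ σ = -1) (hτ : τ = 1 ∨ τ = -1)
    {d1 d2 : ℕ} (h1a : 1 ≤ d1) (h1 : d1 ≤ (g-1)/2) (h2a : 1 ≤ d2) (h2 : d2 ≤ (g-1)/2)
    (h : ((τ : ℤ) : ZMod g) * (d1 : ZMod g) = ((σ : ℤ) : ZMod g) * (d2 : ZMod g)) :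
    τ = σ ∧ d1 = d2 := by
  rcases hσ with rfl | rfl <;> rcases hτ with rfl | rfl <;>
    simp only [Int.cast_one, Int.cast_neg, one_mul, neg_mul, neg_neg] at h
  · exact ⟨rfl, cast_inj_range g hg3 (by omega) (by omega) h⟩
  · exact absurd h.symm (by
      have := cast_ne_neg g hg3 h2a h2 h1a h1
      simpa [eq_comm, neg_eq_iff_eq_neg] using this)
  · exact absurd h (by
      have := cast_ne_neg g hg3 h1a h1 h2a h2
      simpa [neg_eq_iff_eq_neg, eq_comm] using this)
  · refine ⟨rfl, cast_inj_range g hg3 (by omega) (by omega) ?_⟩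
    exact neg_injective h

end ranges
end S17

namespace S17
open S17B

section factor
variable (k g : ℕ) (i : ZMod (k+1)) (d : ℕ)
variable (hk4 : 4 ∣ k) (hk : 4 ≤ k) (hg3 : 3 ≤ g) (hd1 : 1 ≤ d) (hd2 : d ≤ (g-1)/2)

include hg3 hd1 hd2 in
lemma rel_ne {x y : ZMod (k+1) × ZMod g} (h : Rel k g i d x y) : x ≠ y := by
  obtain ⟨s, _, _, h3⟩ := h
  intro rfl'
  subst rfl'
  have h4 : ((eps k s : ℤ) : ZMod g) * (d : ZMod g) = 0 := by linear_combination -h3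
  rcases eps_eq_one_or k s with he | he <;> rw [he] at h4 <;>
    simp only [Int.cast_one, Int.cast_neg, one_mul, neg_mul, neg_eq_zero] at h4 <;>
    exact dcast_ne_zero g hg3 hd1 hd2 h4

include hg3 hd1 hd2 in
lemma adj_iff {x y : ZMod (k+1) × ZMod g} :
    (F k g i d).Adj x y ↔ Rel k g i d x y ∨ Rel k g i d y x := by
  constructor
  · rintro ⟨-, h⟩; exact h
  · rintro (h | h)
    · exact ⟨rel_ne k g i d hg3 hd1 hd2 h, Or.inl h⟩
    · exact ⟨(rel_ne k g i d hg3 hd1 hd2 h).symm, Or.inr h⟩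

include hk in
lemma rel_fst {x y : ZMod (k+1) × ZMod g} (h : Rel k g i d x y) : x.1 ≠ i ∧ y.1 ≠ i := by
  obtain ⟨s, h1, h2, -⟩ := h
  constructor
  · rw [h1]; intro hc
    exact P_ne_zero k hk s (by linear_combination hc)
  · rw [h2]; intro hc
    exact P_ne_zero k hk (s+1) (by linear_combination hc)

include hk4 hk hg3 hd1 hd2 in
lemma adj_tensor {x y : ZMod (k+1) × ZMod g} (h : (F k g i d).Adj x y) :
    x.1 ≠ y.1 ∧ x.2 ≠ y.2 := by
  have : ∀ u v : ZMod (k+1) × ZMod g, Rel k g i d u v → u.1 ≠ v.1 ∧ u.2 ≠ v.2 := by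
    rintro u v ⟨s, h1, h2, h3⟩
    constructor
    · rw [h1, h2]
      intro hc
      have hps : P k (s+1) - P k s = 0 := by linear_combination -hc
      rw [key k hk4 hk s] at hps
      rcases eps_eq_one_or k s with he | he <;> rw [he] at hps <;>
        simp only [Int.cast_one, Int.cast_neg, one_mul, neg_mul, neg_eq_zero] at hps <;>
        exact Dz_ne_zero k hk4 hk s hps
    · intro hc
      rw [← hc] at h3
      have h4 : ((eps k s : ℤ) : ZMod g) * (d : ZMod g) = 0 := by linear_combination -h3
      rcases eps_eq_one_or k s with he | he <;> rw [he] at h4 <;>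
        simp only [Int.cast_one, Int.cast_neg, one_mul, neg_mul, neg_eq_zero] at h4 <;>
        exact dcast_ne_zero g hg3 hd1 hd2 h4
  rw [adj_iff k g i d hg3 hd1 hd2] at h
  rcases h with h | h
  · exact this x y h
  · exact ⟨(this y x h).1.symm, (this y x h).2.symm⟩

/-- successor of `x` (at position `s`) along its cycle -/
def nxt (s : ZMod k) (x : ZMod (k+1) × ZMod g) : ZMod (k+1) × ZMod g :=
  (i + P k (s+1), x.2 + ((eps k s : ℤ) : ZMod g) * (d : ZMod g))

/-- predecessor of `x` (at position `s`) along its cycle -/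
def prv (s : ZMod k) (x : ZMod (k+1) × ZMod g) : ZMod (k+1) × ZMod g :=
  (i + P k (s-1), x.2 - ((eps k (s-1) : ℤ) : ZMod g) * (d : ZMod g))

include hk4 hk hg3 hd1 hd2 in
lemma adj_char {x y : ZMod (k+1) × ZMod g} {s : ZMod k} (hx : x.1 = i + P k s) :
    (F k g i d).Adj x y ↔ (y = nxt k g i d s x ∨ y = prv k g i d s x) := by
  have : NeZero k := ⟨by omega⟩
  rw [adj_iff k g i d hg3 hd1 hd2]
  constructor
  · rintro (⟨t, h1, h2, h3⟩ | ⟨t, h1, h2, h3⟩)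
    · left
      have hts : t = s := P_inj k hk4 hk (by rw [hx] at h1; linear_combination -h1)
      subst hts
      exact Prod.ext h2 h3
    · right
      have hts : t = s - 1 := by
        have : t + 1 = s := P_inj k hk4 hk (by rw [hx] at h2; linear_combination -h2)
        linear_combination this
      subst hts
      refine Prod.ext (by rw [h1]; rfl) ?_
      show y.2 = x.2 - _
      linear_combination -h3
  · rintro (rfl | rfl)
    · exact Or.inl ⟨s, hx, rfl, rfl⟩
    · refine Or.inr ⟨s - 1, rfl, by rw [sub_add_cancel, hx], ?_⟩
      show x.2 = x.2 - _ + _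
      ring

include hk4 hk hg3 hd1 hd2 in
lemma nbhd_eq {x : ZMod (k+1) × ZMod g} {s : ZMod k} (hx : x.1 = i + P k s) :
    (F k g i d).neighborSet x = {nxt k g i d s x, prv k g i d s x} := by
  ext y
  exact adj_char k g i d hk4 hk hg3 hd1 hd2 hx

include hk4 hk in
lemma nxt_ne_prv {x : ZMod (k+1) × ZMod g} (s : ZMod k) :
    nxt k g i d s x ≠ prv k g i d s x := by
  have : NeZero k := ⟨by omega⟩
  intro h
  have h1 : P k (s+1) = P k (s-1) := by
    have := congrArg Prod.fst h
    simpa [nxt, prv] using this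
  have h2 : s + 1 = s - 1 := P_inj k hk4 hk h1
  have h3 : (2 : ZMod k) = 0 := by linear_combination h2
  have := congrArg ZMod.val h3
  rw [ZMod.val_zero, show ((2 : ZMod k)) = ((2 : ℕ) : ZMod k) by push_cast; ring,
    ZMod.val_cast_of_lt (by omega)] at this
  omega

end factor
end S17

namespace S17
open S17B

lemma walk_closed {V : Type*} {G : SimpleGraph V} {R : Set V}
    (hcl : ∀ u v, G.Adj u v → u ∈ R → v ∈ R) :
    ∀ {a b : V}, G.Walk a b → a ∈ R → b ∈ R := by
  intro a b p
  induction p with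
  | nil => exact id
  | cons h p ih => intro ha; exact ih (hcl _ _ h ha)

section cyc
variable (k g : ℕ) (i : ZMod (k+1)) (d : ℕ)
variable (hk4 : 4 ∣ k) (hk : 4 ≤ k) (hg3 : 3 ≤ g) (hd1 : 1 ≤ d) (hd2 : d ≤ (g-1)/2)

/-- height of a position -/
def hgt (t : ZMod k) : ZMod g := ((t.val % 2 : ℕ) : ZMod g)

/-- the cycle through `x` (at position `s`) -/
def cyc (s : ZMod k) (x : ZMod (k+1) × ZMod g) (t : ZMod k) : ZMod (k+1) × ZMod g :=
  (i + P k t, x.2 + (hgt k g t - hgt k g s) * (d : ZMod g))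

include hk4 hk in
lemma hgt_succ (t : ZMod k) :
    hgt k g (t+1) - hgt k g t = ((eps k t : ℤ) : ZMod g) := by
  have : NeZero k := ⟨by omega⟩
  have hs := val_succ k hk t
  have hv : t.val < k := ZMod.val_lt t
  obtain ⟨c, rfl⟩ := hk4
  unfold hgt eps
  rw [hs]
  by_cases hw : t.val = 4*c-1
  · rw [if_pos hw]
    have hodd : Odd t.val := by rw [Nat.odd_iff]; omega
    rw [show t.val % 2 = 1 from by omega]
    simp only [hodd.neg_one_pow]
    push_cast
    ring
  · rw [if_neg hw]
    rcases Nat.even_or_odd t.val with he | ho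
    · have h1 : t.val % 2 = 0 := by rw [Nat.even_iff] at he; omega
      rw [h1, show (t.val + 1) % 2 = 1 from by omega]
      simp only [he.neg_one_pow]
      push_cast
      ring
    · have h1 : t.val % 2 = 1 := by rw [Nat.odd_iff] at ho; omega
      rw [h1, show (t.val + 1) % 2 = 0 from by omega]
      simp only [ho.neg_one_pow]
      push_cast
      ring

include hk4 hk in
lemma cyc_rel (s : ZMod k) (x : ZMod (k+1) × ZMod g) (t : ZMod k) :
    Rel k g i d (cyc k g i d s x t) (cyc k g i d s x (t+1)) :=
  ⟨t, rfl, rfl, by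
    show x.2 + _ = x.2 + _ + _
    linear_combination (hgt_succ k g hk4 hk t) * (d : ZMod g)⟩

lemma cyc_self {s : ZMod k} {x : ZMod (k+1) × ZMod g} (hx : x.1 = i + P k s) :
    cyc k g i d s x s = x := by
  refine Prod.ext hx.symm ?_
  show x.2 + _ = x.2
  ring

include hk4 hk in
lemma cyc_nxt (s : ZMod k) (x : ZMod (k+1) × ZMod g) (t : ZMod k) :
    nxt k g i d t (cyc k g i d s x t) = cyc k g i d s x (t+1) := by
  refine Prod.ext rfl ?_
  show x.2 + _ + _ = x.2 + _
  linear_combination -(hgt_succ k g hk4 hk t) * (d : ZMod g)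

include hk4 hk in
lemma cyc_prv (s : ZMod k) (x : ZMod (k+1) × ZMod g) (t : ZMod k) :
    prv k g i d t (cyc k g i d s x t) = cyc k g i d s x (t-1) := by
  refine Prod.ext rfl ?_
  have h := hgt_succ k g hk4 hk (t-1)
  rw [sub_add_cancel] at h
  show x.2 + _ - _ = x.2 + _
  linear_combination h * (d : ZMod g)

include hk4 hk in
lemma cyc_inj (s : ZMod k) (x : ZMod (k+1) × ZMod g) :
    Function.Injective (cyc k g i d s x) := by
  intro t t' h
  have h1 : i + P k t = i + P k t' := congrArg Prod.fst h
  exact P_inj k hk4 hk (by linear_combination h1)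

include hk4 hk hg3 hd1 hd2 in
lemma reach_eq {x : ZMod (k+1) × ZMod g} {s : ZMod k} (hx : x.1 = i + P k s) :
    {w | (F k g i d).Reachable x w} = Set.range (cyc k g i d s x) := by
  have : NeZero k := ⟨by omega⟩
  have hx0 : x ∈ Set.range (cyc k g i d s x) := ⟨s, cyc_self k g i d hx⟩
  apply Set.eq_of_subset_of_subset
  · intro w hw
    obtain ⟨p⟩ := hw
    refine walk_closed ?_ p hx0
    rintro u v huv ⟨t, rfl⟩
    rw [adj_char k g i d hk4 hk hg3 hd1 hd2 (rfl : (cyc k g i d s x t).1 = i + P k t)] at huv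
    rcases huv with rfl | rfl
    · exact ⟨t+1, (cyc_nxt k g i d hk4 hk s x t).symm⟩
    · exact ⟨t-1, (cyc_prv k g i d hk4 hk s x t).symm⟩
  · rintro w ⟨t, rfl⟩
    have hstep : ∀ j : ℕ, (F k g i d).Reachable x (cyc k g i d s x (s + j)) := by
      intro j
      induction j with
      | zero =>
        rw [Nat.cast_zero, add_zero, cyc_self k g i d hx]
      | succ n ih =>
        refine ih.trans (SimpleGraph.Adj.reachable ?_)
        have : ((n+1 : ℕ) : ZMod k) = (n : ZMod k) + 1 := by push_cast; ring
        rw [this, ← add_assoc]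
        exact (adj_iff k g i d hg3 hd1 hd2).mpr (Or.inl (cyc_rel k g i d hk4 hk s x (s + n)))
    have := hstep (t - s).val
    rwa [ZMod.natCast_rightInverse (t - s), add_sub_cancel] at this

include hk4 hk hg3 hd1 hd2 in
lemma F_cycles : IsUnionOfCycles (F k g i d) {x | x.1 ≠ i} k := by
  have : NeZero k := ⟨by omega⟩
  have hpos : ∀ v : ZMod (k+1) × ZMod g, v.1 ≠ i → ∃ s : ZMod k, v.1 = i + P k s := by
    intro v hv
    obtain ⟨s, hs⟩ := P_surj k hk4 hk (sub_ne_zero.mpr hv)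
    exact ⟨s, by linear_combination -hs⟩
  refine ⟨?_, ?_, ?_⟩
  · intro v
    constructor
    · intro hv
      obtain ⟨s, hx⟩ := hpos v hv
      exact ⟨nxt k g i d s v, (adj_char k g i d hk4 hk hg3 hd1 hd2 hx).mpr (Or.inl rfl)⟩
    · rintro ⟨y, hy⟩
      rw [SimpleGraph.mem_neighborSet, adj_iff k g i d hg3 hd1 hd2] at hy
      rcases hy with hy | hy
      · exact (rel_fst k g i d hk hy).1
      · exact (rel_fst k g i d hk hy).2
  · intro v hv
    obtain ⟨s, hx⟩ := hpos v hv
    rw [nbhd_eq k g i d hk4 hk hg3 hd1 hd2 hx]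
    exact Set.ncard_pair (nxt_ne_prv k g i d hk4 hk s)
  · intro v hv
    obtain ⟨s, hx⟩ := hpos v hv
    rw [reach_eq k g i d hk4 hk hg3 hd1 hd2 hx, ← Set.image_univ,
      Set.ncard_image_of_injective _ (cyc_inj k g i d hk4 hk s v), Set.ncard_univ, Nat.card_zmod]

end cyc
end S17

namespace S17
open S17B

section unique
variable (k g : ℕ) (hk4 : 4 ∣ k) (hk : 4 ≤ k) (hg : Odd g) (hg3 : 3 ≤ g)

include hg hg3 in
lemma delta_decomp {δ : ZMod g} (hδ : δ ≠ 0) :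
    ∃ (σ : ℤ) (d0 : ℕ), (σ = 1 ∨ σ = -1) ∧ 1 ≤ d0 ∧ d0 ≤ (g-1)/2 ∧
      δ = ((σ : ℤ) : ZMod g) * (d0 : ZMod g) := by
  have : NeZero g := ⟨by omega⟩
  have hv : δ.val < g := ZMod.val_lt δ
  have hv0 : δ.val ≠ 0 := fun h => hδ (by rwa [ZMod.val_eq_zero] at h)
  have hδv : ((δ.val : ℕ) : ZMod g) = δ := ZMod.natCast_rightInverse δ
  obtain ⟨m, hm⟩ := hg
  by_cases hle : δ.val ≤ (g-1)/2
  · exact ⟨1, δ.val, Or.inl rfl, by omega, hle, by rw [Int.cast_one, one_mul, hδv]⟩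
  · refine ⟨-1, g - δ.val, Or.inr rfl, by omega, by omega, ?_⟩
    have hg0 : ((g : ℕ) : ZMod g) = 0 := ZMod.natCast_self g
    push_cast [Nat.cast_sub (le_of_lt hv)]
    rw [hδv]
    linear_combination hg0

include hk4 hk hg hg3 in
lemma exists_unique_factor {x y : ZMod (k+1) × ZMod g}
    (h1 : x.1 ≠ y.1) (h2 : x.2 ≠ y.2) :
    ∃! p : ZMod (k+1) × Fin ((g-1)/2), (F k g p.1 (p.2.val+1)).Adj x y := by
  have hnk : NeZero k := ⟨by omega⟩
  have hng : NeZero g := ⟨by omega⟩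
  obtain ⟨σ, d0, hσ, hd0a, hd0b, hδ⟩ :=
    delta_decomp g hg hg3 (sub_ne_zero.mpr (Ne.symm h2))
  have hσ2n : ((σ : ℤ) : ZMod (k+1)) * ((σ : ℤ) : ZMod (k+1)) = 1 := by
    rcases hσ with rfl | rfl <;> norm_num
  have hc0 : y.1 - x.1 ≠ 0 := sub_ne_zero.mpr (Ne.symm h1)
  have htgt : ((σ : ℤ) : ZMod (k+1)) * (y.1 - x.1) ≠ 0 := by
    rcases hσ with rfl | rfl <;>
      simp only [Int.cast_one, Int.cast_neg, one_mul, neg_mul, neg_eq_zero, ne_eq] <;>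
      first
      | exact hc0
      | exact fun h => hc0 (neg_eq_zero.mp h)
      | intro h; exact hc0 (by linear_combination -h)
  obtain ⟨s0, hs0⟩ := Dz_surj k hk4 hk htgt
  -- uniqueness core
  have huniq : ∀ (i' : ZMod (k+1)) (d' : ℕ), 1 ≤ d' → d' ≤ (g-1)/2 →
      (F k g i' d').Adj x y →
      d' = d0 ∧ ((eps k s0 = σ ∧ i' = x.1 - P k s0) ∨ (eps k s0 = -σ ∧ i' = y.1 - P k s0)) := by
    intro i' d' hd'1 hd'2 hadj
    rw [adj_iff k g i' d' hg3 hd'1 hd'2] at hadj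
    rcases hadj with ⟨t, ha, hb, hcc⟩ | ⟨t, ha, hb, hcc⟩
    · have h3 : ((eps k t : ℤ) : ZMod g) * (d' : ZMod g) = ((σ : ℤ) : ZMod g) * (d0 : ZMod g) := by
        linear_combination hδ - hcc
      obtain ⟨hτσ, hdd⟩ := sign_resolve g hg3 hσ (eps_eq_one_or k t) hd'1 hd'2 hd0a hd0b h3
      have h4 : ((eps k t : ℤ) : ZMod (k+1)) * Dz k t = y.1 - x.1 := by
        rw [← key k hk4 hk t]
        linear_combination ha - hb
      rw [hτσ] at h4
      have h5 : Dz k t = ((σ : ℤ) : ZMod (k+1)) * (y.1 - x.1) := by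
        linear_combination ((σ : ℤ) : ZMod (k+1)) * h4 - (Dz k t) * hσ2n
      have ht0 : t = s0 := Dz_inj k hk4 hk (h5.trans hs0.symm)
      rw [ht0] at hτσ ha
      exact ⟨hdd, Or.inl ⟨hτσ, by linear_combination -ha⟩⟩
    · have hσ' : (-σ : ℤ) = 1 ∨ (-σ : ℤ) = -1 := by
        rcases hσ with rfl | rfl
        · right; norm_num
        · left; norm_num
      have h3 : ((eps k t : ℤ) : ZMod g) * (d' : ZMod g) = (((-σ : ℤ)) : ZMod g) * (d0 : ZMod g) := by
        push_cast
        linear_combination -hδ - hcc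
      obtain ⟨hτσ, hdd⟩ := sign_resolve g hg3 hσ' (eps_eq_one_or k t) hd'1 hd'2 hd0a hd0b h3
      have h4 : ((eps k t : ℤ) : ZMod (k+1)) * Dz k t = x.1 - y.1 := by
        rw [← key k hk4 hk t]
        linear_combination ha - hb
      rw [hτσ] at h4
      push_cast at h4
      have h5 : Dz k t = ((σ : ℤ) : ZMod (k+1)) * (y.1 - x.1) := by
        linear_combination (-((σ : ℤ) : ZMod (k+1))) * h4 - (Dz k t) * hσ2n
      have ht0 : t = s0 := Dz_inj k hk4 hk (h5.trans hs0.symm)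
      rw [ht0] at hτσ ha
      exact ⟨hdd, Or.inr ⟨hτσ, by linear_combination -ha⟩⟩
  have hd00 : d0 - 1 + 1 = d0 := by omega
  have hAB : eps k s0 = σ ∨ eps k s0 = -σ := by
    rcases eps_eq_one_or k s0 with h | h <;> rcases hσ with rfl | rfl
    · exact Or.inl h
    · exact Or.inr (by rw [h]; try norm_num)
    · exact Or.inr (by rw [h]; try norm_num)
    · exact Or.inl h
  rcases hAB with hA | hB
  · refine ⟨(x.1 - P k s0, ⟨d0 - 1, by omega⟩), ?_, ?_⟩
    · show (F k g (x.1 - P k s0) (d0 - 1 + 1)).Adj x y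
      rw [hd00, adj_iff k g _ d0 hg3 hd0a hd0b]
      refine Or.inl ⟨s0, by ring, ?_, ?_⟩
      · have hkey := key k hk4 hk s0
        rw [hA, hs0] at hkey
        linear_combination -hkey - (y.1 - x.1) * hσ2n
      · rw [hA]
        linear_combination hδ
    · rintro ⟨i', dI'⟩ hadj
      obtain ⟨hd', hcases⟩ := huniq i' (dI'.val + 1) (by omega) (by have := dI'.2; omega) hadj
      rcases hcases with ⟨hε, hi⟩ | ⟨hε, hi⟩
      · refine Prod.ext hi (Fin.ext ?_)
        show dI'.val = d0 - 1
        omega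
      · exfalso
        have : σ = -σ := hA.symm.trans hε
        rcases hσ with rfl | rfl <;> omega
  · refine ⟨(y.1 - P k s0, ⟨d0 - 1, by omega⟩), ?_, ?_⟩
    · show (F k g (y.1 - P k s0) (d0 - 1 + 1)).Adj x y
      rw [hd00, adj_iff k g _ d0 hg3 hd0a hd0b]
      refine Or.inr ⟨s0, by ring, ?_, ?_⟩
      · have hkey := key k hk4 hk s0
        rw [hB, hs0] at hkey
        push_cast at hkey
        linear_combination -hkey + (y.1 - x.1) * hσ2n
      · rw [hB]
        push_cast
        linear_combination -hδ
    · rintro ⟨i', dI'⟩ hadj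
      obtain ⟨hd', hcases⟩ := huniq i' (dI'.val + 1) (by omega) (by have := dI'.2; omega) hadj
      rcases hcases with ⟨hε, hi⟩ | ⟨hε, hi⟩
      · exfalso
        have h' : -σ = σ := hB.symm.trans hε
        rcases hσ with rfl | rfl <;> omega
      · refine Prod.ext hi (Fin.ext ?_)
        show dI'.val = d0 - 1
        omega

end unique
end S17

open S17 S17B in
theorem main17 (k g' : ℕ) (hk4 : 4 ∣ k) (hk0 : 0 < k) (hg : Odd (g'+1)) (hg3 : 3 ≤ g'+1) :
    ∃ H : Fin ((k + 1) * (g' + 1 - 1) / 2) → SimpleGraph (Fin (k + 1) × Fin (g'+1)),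
      IsARCS (k + 1) (g'+1) 1 k ((k + 1) * (g' + 1 - 1) / 2) H := by
  have hk : 4 ≤ k := Nat.le_of_dvd hk0 hk4
  have hN : (k + 1) * (g' + 1 - 1) / 2 = (k+1) * ((g' + 1 - 1)/2) := by
    obtain ⟨m, hm⟩ := hg
    exact Nat.mul_div_assoc _ ⟨m, by omega⟩
  let E : Fin ((k + 1) * (g' + 1 - 1) / 2) ≃ Fin (k+1) × Fin ((g' + 1 - 1)/2) :=
    (finCongr hN).trans finProdFinEquiv.symm
  have hd2 : ∀ m : Fin ((k + 1) * (g' + 1 - 1) / 2),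
      (E m).2.val + 1 ≤ (g' + 1 - 1)/2 := by
    intro m
    have := (E m).2.isLt
    omega
  refine ⟨fun m => F k (g'+1) ((E m).1) ((E m).2.val + 1), ?_, ?_⟩
  · intro m
    constructor
    · intro x y h
      exact adj_tensor k (g'+1) ((E m).1) ((E m).2.val + 1) hk4 hk hg3 (by omega) (hd2 m) h
    · exact ⟨(E m).1,
        F_cycles k (g'+1) ((E m).1) ((E m).2.val + 1) hk4 hk hg3 (by omega) (hd2 m)⟩
  · intro x y hxy
    obtain ⟨hne1, hne2⟩ := hxy
    obtain ⟨p0, hp0, hup⟩ := exists_unique_factor k (g'+1) hk4 hk hg hg3 hne1 hne2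
    have key2 : ∀ m, (F k (g'+1) ((E m).1) ((E m).2.val + 1)).Adj x y ↔
        m = E.symm p0 := by
      intro m
      constructor
      · intro hm
        have h' : (((E m).1, (E m).2) : ZMod (k+1) × Fin ((g' + 1 - 1)/2)) = p0 := hup _ hm
        have h'' : E m = p0 := h'
        rw [← h'']
        exact (Equiv.symm_apply_apply E m).symm
      · rintro rfl
        have h3 : E (E.symm p0) = p0 := E.apply_symm_apply p0
        rw [h3]
        exact hp0
    have hset : {m | (F k (g'+1) ((E m).1) ((E m).2.val + 1)).Adj x y} = {E.symm p0} :=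
      Set.ext fun m => by rw [Set.mem_setOf_eq, Set.mem_singleton_iff]; exact key2 m
    rw [hset, Set.ncard_singleton]


/-- For `k ≡ 0 (mod 4)` and odd `g ≥ 3`, the graph `K_{k+1} × K_g` has a
`k`-ARCS: its edge set partitions into `(k+1)(g-1)/2` partial `C_k`-factors. -/
theorem stmt17 (k g : ℕ) (hk : 4 ∣ k) (hk0 : 0 < k) (hg : Odd g) (hg3 : 3 ≤ g) :
    ∃ H : Fin ((k + 1) * (g - 1) / 2) → SimpleGraph (Fin (k + 1) × Fin g),
      IsARCS (k + 1) g 1 k ((k + 1) * (g - 1) / 2) H := by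
  obtain ⟨g', rfl⟩ : ∃ g', g = g' + 1 := ⟨g - 1, by omega⟩
  exact main17 k g' hk hk0 hg hg3
end
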